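/- arXiv:2007.09716 — 8 statements merged into one kernel-verified Lean document; each statement's English description precedes it below -/
import Mathlib

section
/- If f is analytic on the unit disk with f(z) = z + a₂z² + ... and |(z/f(z))²·f'(z) − 1| < λ for all z in the unit disk (where 0 < λ ≤ 1), then f is univalent (injective) on the unit disk. -/
open Complex Metric
open Set Filter

lemma analyticOnNhd_dslope_aux {f : ℂ → ℂ} (hf : AnalyticOnNhd ℂ f (ball 0 1)) :
    AnalyticOnNhd ℂ (dslope f 0) (ball 0 1) := by
  intro z hz
  rcases eq_or_ne z 0 with rfl | hz0
  · obtain ⟨p, hp⟩ := hf 0 (by simp)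
    exact hp.has_fpower_series_dslope_fslope.analyticAt
  · have h1 : AnalyticAt ℂ (fun w => (w - 0)⁻¹ • (f w - f 0)) z := by
      apply AnalyticAt.fun_smul
      · exact ((analyticAt_id.sub analyticAt_const).inv (by simpa using hz0))
      · exact (hf z hz).sub analyticAt_const
    apply h1.congr
    filter_upwards [eventually_ne_nhds hz0] with w hw
    rw [dslope_of_ne _ hw, slope_def_field]
    simp [div_eq_inv_mul]

theorem univalence_of_U_lambda (f : ℂ → ℂ) (lam : ℝ) (hlam0 : 0 < lam) (hlam1 : lam ≤ 1)
    (hf : AnalyticOnNhd ℂ f (ball 0 1)) (hf0 : f 0 = 0) (hf1 : deriv f 0 = 1)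
    (hU : ∀ z ∈ ball (0:ℂ) 1, z ≠ 0 → ‖(z / f z) ^ 2 * deriv f z - 1‖ < lam) :
    Set.InjOn f (ball 0 1) := by
  have hball : (0:ℂ) ∈ ball (0:ℂ) 1 := by simp
  -- f does not vanish on the punctured ball
  have hne : ∀ z ∈ ball (0:ℂ) 1, z ≠ 0 → f z ≠ 0 := by
    intro z hz hz0 hfz
    have h := hU z hz hz0
    rw [hfz, div_zero] at h
    norm_num at h
    linarith
  set u : ℂ → ℂ := dslope f 0 with hudef
  have hu0 : u 0 = 1 := by simp [hudef, dslope_same, hf1]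
  have huz : ∀ z : ℂ, z ≠ 0 → u z = f z / z := by
    intro z hz
    rw [hudef, dslope_of_ne _ hz, slope_def_field, hf0, sub_zero, sub_zero]
  have hfu : ∀ z : ℂ, f z = z * u z := by
    intro z
    rcases eq_or_ne z 0 with rfl | hz
    · simp [hf0]
    · rw [huz z hz]; field_simp
  have huA : AnalyticOnNhd ℂ u (ball 0 1) := analyticOnNhd_dslope_aux hf
  have hune : ∀ z ∈ ball (0:ℂ) 1, u z ≠ 0 := by
    intro z hz
    rcases eq_or_ne z 0 with rfl | hz0
    · rw [hu0]; exact one_ne_zero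
    · rw [huz z hz0]; exact div_ne_zero (hne z hz hz0) hz0
  -- the auxiliary function h with double zero at 0
  set h : ℂ → ℂ := fun z => 1 - deriv f z / (u z) ^ 2 with hhdef
  have hderivA : AnalyticOnNhd ℂ (deriv f) (ball 0 1) := hf.deriv
  have hhA : AnalyticOnNhd ℂ h (ball 0 1) := fun z hz =>
    analyticAt_const.sub ((hderivA z hz).div ((huA z hz).pow 2) (pow_ne_zero 2 (hune z hz)))
  have hh0 : h 0 = 0 := by simp [hhdef, hf1, hu0]
  have hhlt : ∀ z ∈ ball (0:ℂ) 1, ‖h z‖ < lam := by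
    intro z hz
    rcases eq_or_ne z 0 with rfl | hz0
    · rw [hh0]; simpa using hlam0
    · have hzf : z / f z = (u z)⁻¹ := by
        rw [hfu z, div_mul_eq_div_div, div_self hz0, one_div]
      have : h z = -((z / f z) ^ 2 * deriv f z - 1) := by
        rw [hhdef, hzf]
        simp only [inv_pow]
        ring
      rw [this, norm_neg]
      exact hU z hz hz0
  -- h'(0) = 0
  have hh'0 : deriv h 0 = 0 := by
    have huA0 : AnalyticAt ℂ u 0 := huA 0 hball
    have hu'A : AnalyticAt ℂ (deriv u) 0 := huA.deriv 0 hball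
    have huD : DifferentiableAt ℂ u 0 := huA0.differentiableAt
    have hu'D : DifferentiableAt ℂ (deriv u) 0 := hu'A.differentiableAt
    have hev : deriv f =ᶠ[nhds 0] fun z => u z + z * deriv u z := by
      filter_upwards [huA0.eventually_analyticAt] with z hz
      have hfe : f = fun w => w * u w := funext hfu
      rw [hfe, deriv_fun_mul differentiableAt_fun_id hz.differentiableAt]
      simp
    have hdf2 : deriv (deriv f) 0 = 2 * deriv u 0 := by
      rw [hev.deriv_eq, deriv_fun_add huD (differentiableAt_fun_id.fun_mul hu'D),
        deriv_fun_mul differentiableAt_fun_id hu'D]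
      simp
      ring
    have hdfD : DifferentiableAt ℂ (deriv f) 0 := (hderivA 0 hball).differentiableAt
    have hstep : deriv h 0 = - deriv (fun z => deriv f z / u z ^ 2) 0 := by
      rw [hhdef]
      exact deriv_const_sub 1
    rw [hstep, deriv_fun_div hdfD (huD.fun_pow 2) (by rw [hu0]; norm_num),
      deriv_fun_pow huD 2, hdf2]
    simp [hu0, hf1]
  -- double Schwarz: ‖h z‖ ≤ lam * ‖z‖²
  have key : ∀ z ∈ ball (0:ℂ) 1, ‖h z‖ ≤ lam * ‖z‖ ^ 2 := by
    intro z hz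
    rcases eq_or_ne z 0 with rfl | hz0
    · simp [hh0]
    have hnz : 0 < ‖z‖ := norm_pos_iff.2 hz0
    have hzlt : ‖z‖ < 1 := by simpa using hz
    have main : ∀ s r : ℝ, ‖z‖ < s → s < r → r < 1 → ‖h z‖ ≤ lam / s ^ 2 * ‖z‖ ^ 2 := by
      intro s r hs hsr hr
      have hs0 : 0 < s := lt_trans hnz hs
      have hr0 : 0 < r := lt_trans hs0 hsr
      have hdh : DifferentiableOn ℂ h (ball 0 r) := fun w hw =>
        ((hhA w (ball_subset_ball hr.le hw)).differentiableAt).differentiableWithinAt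
      have hmaps : MapsTo h (ball (0:ℂ) r) (ball (h 0) lam) := by
        intro w hw
        rw [hh0, mem_ball, dist_zero_right]
        exact hhlt w (ball_subset_ball hr.le hw)
      have S1 : ∀ w ∈ ball (0:ℂ) r, ‖dslope h 0 w‖ ≤ lam / r := fun w hw =>
        norm_dslope_le_div_of_mapsTo_ball hdh (hmaps.mono_right ball_subset_closedBall) hw
      have h10 : dslope h 0 0 = 0 := by rw [dslope_same]; exact hh'0
      have hdh1 : DifferentiableOn ℂ (dslope h 0) (ball 0 s) := by
        apply (differentiableOn_dslope (isOpen_ball.mem_nhds (mem_ball_self hs0))).2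
        exact hdh.mono (ball_subset_ball hsr.le)
      have hmaps1 : MapsTo (dslope h 0) (ball (0:ℂ) s) (ball (dslope h 0 0) (lam / s)) := by
        intro w hw
        rw [h10, mem_ball, dist_zero_right]
        calc ‖dslope h 0 w‖ ≤ lam / r := S1 w (ball_subset_ball hsr.le hw)
          _ < lam / s := div_lt_div_of_pos_left hlam0 hs0 hsr
      have S2 : ‖dslope (dslope h 0) 0 z‖ ≤ lam / s / s :=
        norm_dslope_le_div_of_mapsTo_ball hdh1 (hmaps1.mono_right ball_subset_closedBall) (by rwa [mem_ball, dist_zero_right])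
      have hval : dslope (dslope h 0) 0 z = h z / z / z := by
        rw [dslope_of_ne _ hz0, slope_def_field, h10, sub_zero, sub_zero,
          dslope_of_ne _ hz0, slope_def_field, hh0, sub_zero, sub_zero]
      rw [hval, norm_div, norm_div] at S2
      rw [div_div, div_div] at S2
      rw [div_le_div_iff₀ (by positivity) (by positivity)] at S2
      rw [div_mul_eq_mul_div, le_div_iff₀ (by positivity)]
      calc ‖h z‖ * s ^ 2 = ‖h z‖ * (s * s) := by ring
        _ ≤ lam * (‖z‖ * ‖z‖) := S2
        _ = lam * ‖z‖ ^ 2 := by ring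
    have c1 : ContinuousAt (fun s : ℝ => lam / s ^ 2 * ‖z‖ ^ 2) 1 := by
      apply ContinuousAt.mul _ continuousAt_const
      exact continuousAt_const.div ((continuous_pow 2).continuousAt) (by norm_num)
    have tend : Tendsto (fun s : ℝ => lam / s ^ 2 * ‖z‖ ^ 2) (nhdsWithin 1 (Set.Iio 1))
        (nhds (lam * ‖z‖ ^ 2)) := by
      have h2 : Tendsto (fun s : ℝ => lam / s ^ 2 * ‖z‖ ^ 2) (nhdsWithin 1 (Set.Iio 1))
          (nhds (lam / 1 ^ 2 * ‖z‖ ^ 2)) := c1.tendsto.mono_left nhdsWithin_le_nhds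
      simpa using h2
    apply ge_of_tendsto tend
    filter_upwards [Ioo_mem_nhdsLT_of_mem ⟨hzlt, le_refl (1:ℝ)⟩] with s hs
    exact main s ((s + 1) / 2) hs.1 (by linarith [hs.2]) (by linarith [hs.2])
  -- the function G = 1/f - 1/z, analytically extended
  set G : ℂ → ℂ := fun z => -(dslope u 0 z) / u z with hGdef
  have hGA : AnalyticOnNhd ℂ G (ball 0 1) := fun z hz =>
    ((analyticOnNhd_dslope_aux huA z hz).neg).div (huA z hz) (hune z hz)
  have hGval : ∀ z : ℂ, z ≠ 0 → z ∈ ball (0:ℂ) 1 → G z = 1 / f z - 1 / z := by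
    intro z hz0 hz
    rw [hGdef]
    simp only
    rw [dslope_of_ne _ hz0, slope_def_field, hu0, sub_zero, hfu z]
    field_simp [hune z hz]
    ring
  -- derivative bound for G
  have hGd : ∀ z ∈ ball (0:ℂ) 1, z ≠ 0 → ‖deriv G z‖ ≤ lam := by
    intro z hz hz0
    have hfz := hne z hz hz0
    have hDf : DifferentiableAt ℂ f z := (hf z hz).differentiableAt
    have hev : G =ᶠ[nhds z] fun w => (f w)⁻¹ - w⁻¹ := by
      have h1 : ∀ᶠ w in nhds z, f w ≠ 0 := (hf z hz).continuousAt.eventually_ne hfz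
      have h2 : ∀ᶠ w in nhds z, w ≠ 0 := eventually_ne_nhds hz0
      have h3 : ∀ᶠ w in nhds z, w ∈ ball (0:ℂ) 1 := isOpen_ball.eventually_mem hz
      filter_upwards [h1, h2, h3] with w hw1 hw2 hw3
      rw [hGval w hw2 hw3, one_div, one_div]
    rw [hev.deriv_eq, deriv_fun_sub (hDf.fun_inv hfz) (differentiableAt_inv hz0),
      deriv_fun_inv'' hDf hfz, deriv_inv]
    have hval : -deriv f z / f z ^ 2 - -(z ^ 2)⁻¹ = h z / z ^ 2 := by
      have hf2 : f z ^ 2 = z ^ 2 * u z ^ 2 := by rw [hfu z]; ring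
      rw [hhdef]
      simp only
      rw [hf2]
      field_simp [pow_ne_zero 2 hz0, pow_ne_zero 2 (hune z hz)]
      ring
    rw [hval, norm_div, norm_pow, div_le_iff₀ (pow_pos (norm_pos_iff.2 hz0) 2)]
    exact key z hz
  have hG' : ∀ z ∈ ball (0:ℂ) 1, ‖deriv G z‖ ≤ lam := by
    intro z hz
    rcases eq_or_ne z 0 with rfl | hz0
    · have hc : ContinuousAt (deriv G) 0 := ((hGA.deriv) 0 hball).continuousAt
      have htt : Tendsto (fun w => ‖deriv G w‖) (nhdsWithin 0 {(0:ℂ)}ᶜ) (nhds ‖deriv G 0‖) :=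
        ((hc.tendsto).mono_left nhdsWithin_le_nhds).norm
      apply le_of_tendsto htt
      filter_upwards [self_mem_nhdsWithin,
        mem_nhdsWithin_of_mem_nhds (isOpen_ball.mem_nhds hball)] with w hw1 hw2
      exact hGd w hw2 hw1
    · exact hGd z hz hz0
  -- conclusion
  intro z1 hz1 z2 hz2 hfeq
  by_contra hne12
  have hz20 : z2 ≠ 0 := by
    rintro rfl
    exact hne z1 hz1 (by rintro rfl; exact hne12 rfl) (by rw [hfeq, hf0])
  have hz10 : z1 ≠ 0 := by
    rintro rfl
    exact hne z2 hz2 (fun hh => hne12 hh.symm) (by rw [← hfeq, hf0])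
  have hdiff : ‖G z1 - G z2‖ ≤ lam * ‖z1 - z2‖ :=
    Convex.norm_image_sub_le_of_norm_deriv_le
      (fun x hx => (hGA x hx).differentiableAt) hG' (convex_ball 0 1) hz2 hz1
  have hGsub : G z1 - G z2 = (z1 - z2) / (z1 * z2) := by
    rw [hGval z1 hz10 hz1, hGval z2 hz20 hz2, hfeq]
    field_simp
    ring
  have hzz : ‖z1 * z2‖ < 1 := by
    rw [norm_mul]
    have a1 : ‖z1‖ < 1 := by simpa using hz1
    have a2 : ‖z2‖ < 1 := by simpa using hz2
    nlinarith [norm_nonneg z1, norm_nonneg z2]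
  have hpos : 0 < ‖z1 - z2‖ := by
    rw [norm_pos_iff]; exact sub_ne_zero_of_ne hne12
  rw [hGsub, norm_div, norm_mul] at hdiff
  have hzzpos : 0 < ‖z1‖ * ‖z2‖ :=
    mul_pos (norm_pos_iff.2 hz10) (norm_pos_iff.2 hz20)
  have : ‖z1 - z2‖ / (‖z1‖ * ‖z2‖) ≤ ‖z1 - z2‖ := by
    calc ‖z1 - z2‖ / (‖z1‖ * ‖z2‖) ≤ lam * ‖z1 - z2‖ := hdiff
      _ ≤ 1 * ‖z1 - z2‖ := by nlinarith
      _ = ‖z1 - z2‖ := one_mul _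
  rw [div_le_iff₀ hzzpos] at this
  nlinarith [norm_mul z1 z2]
end

section
/- The function f defined by z/f(z) = (1−z)²(1+z/2), i.e. f(z) = z/((1−z)²(1+z/2)), belongs to the class 𝒰 = 𝒰(1) but is not starlike: at z = i, z·f'(z)/f(z) = −1/5 + 3i/5, which has negative real part. -/
open Complex Metric

theorem U_not_starlike_example (f : ℂ → ℂ)
    (hf : ∀ z, f z = z / ((1 - z) ^ 2 * (1 + z / 2))) :
    (AnalyticOnNhd ℂ f (ball 0 1) ∧ f 0 = 0 ∧ deriv f 0 = 1 ∧
      ∀ z ∈ ball (0:ℂ) 1, z ≠ 0 → ‖(z / f z) ^ 2 * deriv f z - 1‖ < 1) ∧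
    Complex.I * deriv f Complex.I / f Complex.I = -1/5 + (3/5) * Complex.I ∧
    (Complex.I * deriv f Complex.I / f Complex.I).re < 0 ∧
    ¬ (∀ z ∈ ball (0:ℂ) 1, z ≠ 0 → 0 < (z * deriv f z / f z).re) := by
  have hfun : f = fun z => z / ((1 - z) ^ 2 * (1 + z / 2)) := funext hf
  set g : ℂ → ℂ := fun z => (1 - z) ^ 2 * (1 + z / 2) with hg
  have hf' : ∀ z, f z = z / g z := hf
  -- nonvanishing of denominator
  have hgnz : ∀ z : ℂ, ‖z‖ < 1 → g z ≠ 0 := by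
    intro z hz
    have h1 : (1 - z) ≠ 0 := by
      intro h
      have hz1 : z = 1 := by linear_combination -h
      rw [hz1] at hz; norm_num at hz
    have h2 : (1 + z / 2) ≠ 0 := by
      intro h
      have hz2 : z = -2 := by linear_combination 2 * h
      rw [hz2] at hz; norm_num at hz
    exact mul_ne_zero (pow_ne_zero _ h1) h2
  -- derivative of g and f
  have hgd : ∀ z : ℂ, HasDerivAt g (2 * (1 - z) * (0 - 1) * (1 + z / 2) + (1 - z) ^ 2 * (0 + 1 / 2)) z := by
    intro z
    have h1 : HasDerivAt (fun y : ℂ => (1 - y) ^ 2) (2 * (1 - z) ^ 1 * (0 - 1)) z := by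
      simpa using (((hasDerivAt_const z (1:ℂ)).fun_sub (hasDerivAt_id z)).fun_pow 2)
    have h2 : HasDerivAt (fun y : ℂ => 1 + y / 2) (0 + 1 / 2) z :=
      (hasDerivAt_const z (1:ℂ)).add ((hasDerivAt_id z).div_const 2)
    simpa using h1.fun_mul h2
  have hfd : ∀ z : ℂ, g z ≠ 0 → HasDerivAt f ((1 - z ^ 3) / (g z) ^ 2) z := by
    intro z hz
    have h := (hasDerivAt_id z).fun_div (hgd z) hz
    have hnum : (1 : ℂ) * g z - id z * (2 * (1 - z) * (0 - 1) * (1 + z / 2) + (1 - z) ^ 2 * (0 + 1 / 2)) = 1 - z ^ 3 := by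
      simp only [hg, id_eq]; ring
    rw [hfun]
    rw [← hnum]
    exact h
  have hderiv : ∀ z : ℂ, g z ≠ 0 → deriv f z = (1 - z ^ 3) / (g z) ^ 2 := fun z hz => (hfd z hz).deriv
  have hgI : g Complex.I = 1 - 2 * Complex.I := by
    simp only [hg]
    linear_combination (Complex.I / 2) * Complex.I_sq
  have hgInz : g Complex.I ≠ 0 := by
    rw [hgI]
    intro h
    have := congrArg Complex.im h
    simp at this
  have hfI : f Complex.I = Complex.I / (1 - 2 * Complex.I) := by rw [hf', hgI]
  have hdI : deriv f Complex.I = (1 - Complex.I ^ 3) / (1 - 2 * Complex.I) ^ 2 := by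
    rw [hderiv _ hgInz, hgI]
  have h12nz : (1 - 2 * Complex.I : ℂ) ≠ 0 := by
    intro h
    have := congrArg Complex.im h
    simp at this
  have hInz : (Complex.I : ℂ) ≠ 0 := Complex.I_ne_zero
  have hval : Complex.I * deriv f Complex.I / f Complex.I = -1/5 + (3/5) * Complex.I := by
    rw [hdI, hfI]
    field_simp
    rw [div_eq_iff (by rw [mul_comm]; exact h12nz)]
    linear_combination (6 - 5 * Complex.I) * Complex.I_sq
  refine ⟨⟨?_, ?_, ?_, ?_⟩, hval, ?_, ?_⟩
  · rw [hfun]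
    exact analyticOnNhd_id.div ((((analyticOnNhd_const.sub analyticOnNhd_id).pow 2)).mul (analyticOnNhd_const.add (analyticOnNhd_id.div analyticOnNhd_const (by intro x _; norm_num)))) (fun x hx => hgnz x (by simpa [mem_ball, dist_eq_norm] using hx))
  · simp [hf]
  · rw [hderiv 0 (hgnz 0 (by norm_num))]
    simp [hg]
  · intro z hz hz0
    have hz1 : ‖z‖ < 1 := by simpa [mem_ball, dist_eq_norm] using hz
    have hgz := hgnz z hz1
    have h1 : z / f z = g z := by
      rw [hf']
      field_simp
    rw [h1, hderiv z hgz]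
    have h2 : g z ^ 2 * ((1 - z ^ 3) / g z ^ 2) - 1 = -z ^ 3 := by
      field_simp
      ring
    rw [h2]
    calc ‖-z ^ 3‖ = ‖z‖ ^ 3 := by simp
    _ < 1 := pow_lt_one₀ (norm_nonneg z) hz1 (by norm_num)
  · rw [hval]
    simp
    norm_num
  · intro h
    have hzmem : (9/10 : ℂ) * Complex.I ∈ ball (0:ℂ) 1 := by
      simp [mem_ball, dist_eq_norm, norm_mul]
      norm_num
    have hzne : (9/10 : ℂ) * Complex.I ≠ 0 := by
      intro hh
      have := congrArg Complex.im hh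
      simp at this
    have hpos := h _ hzmem hzne
    set z : ℂ := (9/10 : ℂ) * Complex.I with hzdef
    have hz1 : ‖z‖ < 1 := by simpa [mem_ball, dist_eq_norm] using hzmem
    have hgz := hgnz z hz1
    have hq : z * deriv f z / f z = (1 - z ^ 3) / g z := by
      rw [hderiv z hgz, hf']
      field_simp
    have hnum : (1 - z ^ 3 : ℂ) = 1 + (729/1000) * Complex.I := by
      rw [hzdef]
      linear_combination (-(729/1000) * Complex.I) * Complex.I_sq
    have hden : g z = 1 - (3429/2000) * Complex.I := by
      rw [hzdef]
      simp only [hg]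
      linear_combination ((729/2000) * Complex.I) * Complex.I_sq
    rw [hq, hnum, hden] at hpos
    rw [Complex.div_re] at hpos
    simp [Complex.normSq_apply] at hpos
    norm_num at hpos
end

section
/- The function f(z) = −log(1−z) is convex (hence starlike) on the unit disk but does not belong to the class 𝒰(1); in particular (z/f(z))²f'(z) evaluated at z = 0.99 exceeds 1. -/
open Complex Metric

lemma re_lt_one_of_norm_lt_one {z : ℂ} (hz : ‖z‖ < 1) : z.re < 1 := by
  have h := Complex.abs_re_le_norm z
  cases abs_le.mp h with | intro h1 h2 => linarith

lemma aux_re_pos {z : ℂ} (hz : ‖z‖ < 1) {t : ℝ} (ht : t ∈ Set.Icc (0:ℝ) 1) :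
    0 < (1 - (t:ℂ) * z).re := by
  have h1 : ‖(t:ℂ) * z‖ < 1 := by
    rw [norm_mul, Complex.norm_real, Real.norm_eq_abs, _root_.abs_of_nonneg ht.1]
    calc t * ‖z‖ ≤ 1 * ‖z‖ := mul_le_mul_of_nonneg_right ht.2 (norm_nonneg z)
      _ < 1 := by simpa using hz
  have := re_lt_one_of_norm_lt_one h1
  simp only [Complex.sub_re, Complex.one_re]
  linarith

lemma aux_ne {z : ℂ} (hz : ‖z‖ < 1) {t : ℝ} (ht : t ∈ Set.Icc (0:ℝ) 1) :
    (1 - (t:ℂ) * z) ≠ 0 := by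
  intro h
  have := aux_re_pos hz ht
  rw [h] at this; simp at this

/-- derivative of `-log (1-z)` -/
lemma hasDerivAt_negLog {z : ℂ} (hz : 0 < (1 - z).re) :
    HasDerivAt (fun w => -Complex.log (1 - w)) ((1 - z)⁻¹) z := by
  have hslit : (1 - z) ∈ Complex.slitPlane := Or.inl hz
  have h1 : HasDerivAt (fun w : ℂ => 1 - w) (-1) z := by
    simpa using (hasDerivAt_id z).const_sub 1
  have := ((Complex.hasDerivAt_log hslit).comp z h1).neg
  rw [show (1 - z)⁻¹ = -((1 - z)⁻¹ * -1) by ring]; exact this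

lemma negLog_integral {z : ℂ} (hz : ‖z‖ < 1) :
    -Complex.log (1 - z) = ∫ t in (0:ℝ)..1, z * (1 - (t:ℂ) * z)⁻¹ := by
  have huicc : Set.uIcc (0:ℝ) 1 = Set.Icc 0 1 := Set.uIcc_of_le zero_le_one
  have hcont : ContinuousOn (fun t : ℝ => z * (1 - (t:ℂ) * z)⁻¹) (Set.uIcc (0:ℝ) 1) := by
    apply ContinuousOn.mul continuousOn_const
    apply ContinuousOn.inv₀ (by fun_prop)
    rw [huicc]; exact fun t ht => aux_ne hz ht
  have hderiv : ∀ t ∈ Set.uIcc (0:ℝ) 1,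
      HasDerivAt (fun t : ℝ => -Complex.log (1 - (t:ℂ) * z)) (z * (1 - (t:ℂ) * z)⁻¹) t := by
    intro t ht
    rw [huicc] at ht
    have hslit : (1 - (t:ℂ) * z) ∈ Complex.slitPlane := Or.inl (aux_re_pos hz ht)
    have hinner : HasDerivAt (fun u : ℂ => 1 - u * z) (-z) (t:ℂ) := by
      simpa using ((hasDerivAt_id ((t:ℂ))).mul_const z).const_sub 1
    have hE : HasDerivAt (fun u : ℂ => -Complex.log (1 - u * z))
        (z * (1 - (t:ℂ) * z)⁻¹) (t:ℂ) := by
      have := ((Complex.hasDerivAt_log hslit).comp (t:ℂ) hinner).neg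
      rw [show z * (1 - (t:ℂ) * z)⁻¹ = -((1 - (t:ℂ) * z)⁻¹ * -z) by ring]; exact this
    exact hE.comp_ofReal
  have hint : IntervalIntegrable (fun t : ℝ => z * (1 - (t:ℂ) * z)⁻¹)
      MeasureTheory.volume 0 1 := hcont.intervalIntegrable
  have := intervalIntegral.integral_eq_sub_of_hasDerivAt (fun t ht => hderiv t ht) hint
  rw [this]; simp

lemma key_pos {z : ℂ} (hz : ‖z‖ < 1) (hz0 : z ≠ 0) :
    0 < ((1 - z) * (-Complex.log (1 - z)) / z).re := by
  have huicc : Set.uIcc (0:ℝ) 1 = Set.Icc 0 1 := Set.uIcc_of_le zero_le_one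
  have hrw : (1 - z) * (-Complex.log (1 - z)) / z
      = ∫ t in (0:ℝ)..1, (1 - z) * (1 - (t:ℂ) * z)⁻¹ := by
    rw [negLog_integral hz, ← intervalIntegral.integral_const_mul,
      ← intervalIntegral.integral_div]
    apply intervalIntegral.integral_congr
    intro t ht
    simp only
    rw [mul_comm z, mul_div_assoc, mul_div_cancel_right₀ _ hz0]
  have hcont : ContinuousOn (fun t : ℝ => (1 - z) * (1 - (t:ℂ) * z)⁻¹) (Set.uIcc (0:ℝ) 1) := by
    apply ContinuousOn.mul continuousOn_const
    apply ContinuousOn.inv₀ (by fun_prop)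
    rw [huicc]; exact fun t ht => aux_ne hz ht
  have hint : IntervalIntegrable (fun t : ℝ => (1 - z) * (1 - (t:ℂ) * z)⁻¹)
      MeasureTheory.volume 0 1 := hcont.intervalIntegrable
  have hre : ((1 - z) * (-Complex.log (1 - z)) / z).re
      = ∫ t in (0:ℝ)..1, ((1 - z) * (1 - (t:ℂ) * z)⁻¹).re := by
    rw [hrw]
    simpa using (Complex.reCLM.intervalIntegral_comp_comm hint).symm
  rw [hre]
  have hx2 : z.re ^ 2 + z.im ^ 2 < 1 := by
    have h1 : ‖z‖ < 1 := hz
    have h2 := Complex.sq_norm z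
    rw [Complex.normSq_apply] at h2
    nlinarith [norm_nonneg z]
  have hx1 : z.re < 1 := by nlinarith [sq_nonneg z.im]
  apply intervalIntegral.intervalIntegral_pos_of_pos_on
  · exact (Complex.continuous_re.comp_continuousOn hcont).intervalIntegrable
  · intro t ht
    have hN : 0 < Complex.normSq (1 - (t:ℂ) * z) :=
      Complex.normSq_pos.mpr (aux_ne hz ⟨ht.1.le, ht.2.le⟩)
    have heq : ((1 - z) * (1 - (t:ℝ)*z)⁻¹).re
        = ((1-z).re * (1 - (t:ℝ)*z).re + (1-z).im * (1 - (t:ℝ)*z).im)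
          / Complex.normSq (1 - (t:ℝ)*z) := by
      rw [Complex.mul_re, Complex.inv_re, Complex.inv_im]; ring
    rw [heq]
    apply div_pos _ hN
    simp only [Complex.sub_re, Complex.sub_im, Complex.one_re, Complex.one_im,
      Complex.mul_re, Complex.mul_im, Complex.ofReal_re, Complex.ofReal_im]
    obtain ⟨ht0, ht1⟩ := ht
    nlinarith [mul_pos (sub_pos.mpr ht1) (sub_pos.mpr hx1),
      mul_pos ht0 (add_pos_of_pos_of_nonneg (pow_pos (sub_pos.mpr hx1) 2) (sq_nonneg z.im))]
  · norm_num

theorem log_convex_not_in_U (f : ℂ → ℂ)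
    (hf : ∀ z, f z = -Complex.log (1 - z)) :
    (∀ z ∈ ball (0:ℂ) 1, 0 < (1 + z * deriv (deriv f) z / deriv f z).re) ∧
    (∀ z ∈ ball (0:ℂ) 1, z ≠ 0 → 0 < (z * deriv f z / f z).re) ∧
    1 < (((0.99 : ℂ) / f 0.99) ^ 2 * deriv f 0.99).re ∧
    ¬ (∀ z ∈ ball (0:ℂ) 1, z ≠ 0 → ‖(z / f z) ^ 2 * deriv f z - 1‖ < 1) := by
  have hfe : f = fun w => -Complex.log (1 - w) := funext hf
  subst hfe
  -- basic facts for z in the ball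
  have hball : ∀ z : ℂ, z ∈ ball (0:ℂ) 1 → ‖z‖ < 1 := fun z hz => mem_ball_zero_iff.mp hz
  have hrepos : ∀ z : ℂ, ‖z‖ < 1 → 0 < (1 - z).re := by
    intro z hz
    have := re_lt_one_of_norm_lt_one hz
    simp only [Complex.sub_re, Complex.one_re]; linarith
  have hne1 : ∀ z : ℂ, ‖z‖ < 1 → (1 - z) ≠ 0 := by
    intro z hz h
    have := hrepos z hz
    rw [h] at this; simp at this
  have hd1 : ∀ z : ℂ, ‖z‖ < 1 →
      deriv (fun w => -Complex.log (1 - w)) z = (1 - z)⁻¹ := by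
    intro z hz
    exact (hasDerivAt_negLog (hrepos z hz)).deriv
  have h99n : ‖(0.99:ℂ)‖ < 1 := by
    rw [show (0.99:ℂ) = ((0.99:ℝ):ℂ) by norm_num, Complex.norm_real]
    norm_num
  have hgt2 : 2 < (((0.99:ℂ) / (-Complex.log (1 - (0.99:ℂ)))) ^ 2
      * deriv (fun w => -Complex.log (1 - w)) (0.99:ℂ)).re := by
    set L := Real.log 100 with hLdef
    have hL0 : 0 < L := Real.log_pos (by norm_num)
    have hL7 : L < 7 := by
      rw [hLdef, Real.log_lt_iff_lt_exp (by norm_num)]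
      have h1 : (2.7:ℝ) < Real.exp 1 := by linarith [Real.exp_one_gt_d9]
      calc (100:ℝ) < 2.7^7 := by norm_num
      _ ≤ Real.exp 1 ^ 7 := pow_le_pow_left₀ (by norm_num) h1.le 7
      _ = Real.exp 7 := by rw [← Real.exp_nat_mul]; norm_num
    have hfval : -Complex.log (1 - (0.99:ℂ)) = ((L:ℝ):ℂ) := by
      rw [show (1 - (0.99:ℂ)) = ((0.01:ℝ):ℂ) by norm_num,
      ← Complex.ofReal_log (by norm_num : (0:ℝ) ≤ 0.01),
      show (0.01:ℝ) = (100:ℝ)⁻¹ by norm_num, Real.log_inv]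
      push_cast
      simp [hLdef]
    have hdval : deriv (fun w => -Complex.log (1 - w)) (0.99:ℂ) = ((100:ℝ):ℂ) := by
      rw [hd1 _ h99n]
      norm_num
    show 2 < (((0.99:ℂ) / (-Complex.log (1 - (0.99:ℂ)))) ^ 2
      * deriv (fun w => -Complex.log (1 - w)) (0.99:ℂ)).re
    rw [hfval, hdval,
      show ((0.99:ℂ) / ((L:ℝ):ℂ))^2 * ((100:ℝ):ℂ) = (((0.99/L)^2*100 : ℝ):ℂ) by
      push_cast; ring_nf,
      Complex.ofReal_re, div_pow, div_mul_eq_mul_div, lt_div_iff₀ (pow_pos hL0 2)]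
    nlinarith
  refine ⟨?_, ?_, ?_, ?_⟩
  · -- convexity
    intro z hzb
    have hz := hball z hzb
    have hz1 := hne1 z hz
    have hev : deriv (fun w => -Complex.log (1 - w)) =ᶠ[nhds z] fun w => (1 - w)⁻¹ := by
      filter_upwards [isOpen_ball.mem_nhds hzb] with w hw
      exact hd1 w (hball w hw)
    have hdd : deriv (deriv (fun w => -Complex.log (1 - w))) z = ((1 - z) ^ 2)⁻¹ := by
      rw [hev.deriv_eq]
      have h1 : HasDerivAt (fun w : ℂ => 1 - w) (-1) z := by
        simpa using (hasDerivAt_id z).const_sub 1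
      have := (h1.inv hz1).deriv
      rw [show (fun w : ℂ => (1 - w)⁻¹) = (fun w : ℂ => 1 - w)⁻¹ from rfl, this]; field_simp
    rw [hdd, hd1 z hz]
    have heq : 1 + z * ((1 - z) ^ 2)⁻¹ / (1 - z)⁻¹ = (1 - z)⁻¹ := by
      field_simp; ring
    rw [heq, Complex.inv_re]
    exact div_pos (hrepos z hz) (Complex.normSq_pos.mpr hz1)
  · -- starlikeness
    intro z hzb hz0
    have hz := hball z hzb
    have hz1 := hne1 z hz
    have hk := key_pos hz hz0
    set w := (1 - z) * (-Complex.log (1 - z)) / z with hw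
    have hw0 : w ≠ 0 := by
      intro h; rw [h] at hk; simp at hk
    have hL : -Complex.log (1 - z) ≠ 0 := by
      intro h; apply hw0; rw [hw, h]; simp
    have : z * deriv (fun w => -Complex.log (1 - w)) z / (-Complex.log (1 - z)) = w⁻¹ := by
      rw [hd1 z hz, hw]
      field_simp
    rw [show (fun w => -Complex.log (1 - w)) z = -Complex.log (1 - z) from rfl, this,
      Complex.inv_re]
    exact div_pos hk (Complex.normSq_pos.mpr hw0)
  · -- numeric value
    show 1 < (((0.99:ℂ) / (-Complex.log (1 - (0.99:ℂ)))) ^ 2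
      * deriv (fun w => -Complex.log (1 - w)) (0.99:ℂ)).re
    linarith
  · -- not in U(1)
    intro h
    have h2 := h 0.99 (mem_ball_zero_iff.mpr h99n) (by norm_num)
    have h2' : ‖((0.99:ℂ) / (-Complex.log (1 - (0.99:ℂ)))) ^ 2
        * deriv (fun w => -Complex.log (1 - w)) (0.99:ℂ) - 1‖ < 1 := h2
    have h3 := Complex.re_le_norm (((0.99:ℂ) / (-Complex.log (1 - (0.99:ℂ)))) ^ 2
        * deriv (fun w => -Complex.log (1 - w)) (0.99:ℂ) - 1)
    simp only [Complex.sub_re, Complex.one_re] at h3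
    linarith
end

section
/- For each f ∈ 𝒰(λ) with 0 < λ ≤ 1 and expansion f(z) = z + a₂z² + ..., there exists an analytic function ω₁ on 𝔻 with |ω₁(z)| ≤ |z| and |ω₁'(z)| ≤ 1 for all z ∈ 𝔻, such that z/f(z) = 1 − a₂z − λ z ω₁(z). -/
open Complex Metric Filter Set Topology

lemma aux_dslope_analytic {F : ℂ → ℂ} (hF : AnalyticOnNhd ℂ F (ball 0 1)) (hF0 : F 0 = 0) :
    AnalyticOnNhd ℂ (dslope F 0) (ball 0 1) := by
  intro z hz
  rcases eq_or_ne z 0 with rfl | hz0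
  · obtain ⟨p, hp⟩ := hF 0 hz
    exact (hp.has_fpower_series_dslope_fslope).analyticAt
  · have h1 : AnalyticAt ℂ (fun w => F w / w) z := (hF z hz).div analyticAt_id hz0
    apply h1.congr
    filter_upwards [eventually_ne_nhds hz0] with w hw
    rw [dslope_of_ne _ hw, slope_def_field, hF0, sub_zero, sub_zero]

theorem U_lambda_representation (f : ℂ → ℂ) (lam : ℝ) (hlam0 : 0 < lam) (hlam1 : lam ≤ 1)
    (hf : AnalyticOnNhd ℂ f (ball 0 1)) (hf0 : f 0 = 0) (hf1 : deriv f 0 = 1)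
    (hU : ∀ z ∈ ball (0:ℂ) 1, z ≠ 0 → ‖(z / f z) ^ 2 * deriv f z - 1‖ < lam)
    (a : ℕ → ℂ) (ha : ∀ n, a n = iteratedDeriv n f 0 / n.factorial) :
    ∃ ω : ℂ → ℂ, AnalyticOnNhd ℂ ω (ball 0 1) ∧
      (∀ z ∈ ball (0:ℂ) 1, ‖ω z‖ ≤ ‖z‖) ∧
      (∀ z ∈ ball (0:ℂ) 1, ‖deriv ω z‖ ≤ 1) ∧
      (∀ z ∈ ball (0:ℂ) 1, z ≠ 0 → z / f z = 1 - a 2 * z - (lam : ℂ) * z * ω z) := by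
  have h0ball : (0:ℂ) ∈ ball (0:ℂ) 1 := by simp
  -- f does not vanish on the punctured ball
  have hfne : ∀ z ∈ ball (0:ℂ) 1, z ≠ 0 → f z ≠ 0 := by
    intro z hz hz0 hfz
    have := hU z hz hz0
    rw [hfz] at this
    simp at this
    linarith
  -- h = dslope f 0, analytic, nonvanishing, h 0 = 1, h z = f z / z
  set h : ℂ → ℂ := dslope f 0 with hh
  have hh0 : h 0 = 1 := by rw [hh, dslope_same, hf1]
  have hhz : ∀ z : ℂ, z ≠ 0 → h z = f z / z := by
    intro z hz0
    rw [hh, dslope_of_ne _ hz0, slope_def_field, hf0, sub_zero, sub_zero]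
  have hhA : AnalyticOnNhd ℂ h (ball 0 1) := aux_dslope_analytic hf hf0
  have hhne : ∀ z ∈ ball (0:ℂ) 1, h z ≠ 0 := by
    intro z hz
    rcases eq_or_ne z 0 with rfl | hz0
    · rw [hh0]; exact one_ne_zero
    · rw [hhz z hz0]
      exact div_ne_zero (hfne z hz hz0) hz0
  -- g = 1/h
  set g : ℂ → ℂ := fun z => (h z)⁻¹ with hg
  have hgA : AnalyticOnNhd ℂ g (ball 0 1) := fun z hz => (hhA z hz).inv (hhne z hz)
  have hg0 : g 0 = 1 := by rw [hg]; simp [hh0]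
  have hgz : ∀ z ∈ ball (0:ℂ) 1, z ≠ 0 → g z = z / f z := by
    intro z hz hz0
    rw [hg]
    simp only [hhz z hz0, inv_div]
  -- P z = g z - z * deriv g z - 1
  set P : ℂ → ℂ := fun z => g z - z * deriv g z - 1 with hP
  have hgA' : AnalyticOnNhd ℂ (deriv g) (ball 0 1) := hgA.deriv
  have hPA : AnalyticOnNhd ℂ P (ball 0 1) := by
    intro z hz
    exact ((hgA z hz).sub ((analyticAt_id).mul (hgA' z hz))).sub analyticAt_const
  have hP0 : P 0 = 0 := by rw [hP]; simp [hg0]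
  -- key identity : P z = (z / f z)^2 * deriv f z - 1 for z ≠ 0
  have hPkey : ∀ z ∈ ball (0:ℂ) 1, z ≠ 0 → P z = (z / f z) ^ 2 * deriv f z - 1 := by
    intro z hz hz0
    have hfz : f z ≠ 0 := hfne z hz hz0
    have heq : g =ᶠ[nhds z] fun w => w / f w := by
      filter_upwards [isOpen_ball.eventually_mem hz, eventually_ne_nhds hz0,
        ((hf z hz).continuousAt).eventually_ne hfz] with w hw1 hw2 hw3
      exact hgz w hw1 hw2
    have hf' : HasDerivAt f (deriv f z) z := ((hf z hz).differentiableAt).hasDerivAt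
    have hdq : HasDerivAt (fun w => w / f w)
        ((1 * f z - z * deriv f z) / f z ^ 2) z := (hasDerivAt_id z).div hf' hfz
    have hdg : deriv g z = (1 * f z - z * deriv f z) / f z ^ 2 := by
      rw [heq.deriv_eq, hdq.deriv]
    rw [hP]
    simp only [hdg, hgz z hz hz0]
    field_simp
    ring
  have hPlt : ∀ z ∈ ball (0:ℂ) 1, ‖P z‖ < lam := by
    intro z hz
    rcases eq_or_ne z 0 with rfl | hz0
    · rw [hP0]; simpa using hlam0
    · rw [hPkey z hz hz0]; exact hU z hz hz0
  have hdP0 : deriv P 0 = 0 := by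
    have d1 : HasDerivAt g (deriv g 0) 0 := ((hgA 0 h0ball).differentiableAt).hasDerivAt
    have d2 : HasDerivAt (deriv g) (deriv (deriv g) 0) 0 :=
      ((hgA' 0 h0ball).differentiableAt).hasDerivAt
    have d3 : HasDerivAt (fun w : ℂ => w * deriv g w)
        (1 * deriv g 0 + 0 * deriv (deriv g) 0) 0 := (hasDerivAt_id 0).mul d2
    have d4 := (d1.sub d3).sub_const 1
    rw [hP]; refine d4.deriv.trans ?_
    ring
  -- Schwarz, twice
  set P1 : ℂ → ℂ := dslope P 0 with hP1
  have hP1A : AnalyticOnNhd ℂ P1 (ball 0 1) := aux_dslope_analytic hPA hP0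
  have hP10 : P1 0 = 0 := by rw [hP1, dslope_same, hdP0]
  have hP1le : ∀ z ∈ ball (0:ℂ) 1, ‖P1 z‖ ≤ lam := by
    intro z hz
    have := Complex.norm_dslope_le_div_of_mapsTo_ball (c := 0) (R₁ := 1) (R₂ := lam)
      (f := P) (hPA.differentiableOn) ?_ hz
    · simpa using this
    · intro w hw
      rw [mem_closedBall, dist_eq_norm, hP0, sub_zero]
      exact (hPlt w hw).le
  set P2 : ℂ → ℂ := dslope P1 0 with hP2
  have hP2A : AnalyticOnNhd ℂ P2 (ball 0 1) := aux_dslope_analytic hP1A hP10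
  have hP2le : ∀ z ∈ ball (0:ℂ) 1, ‖P2 z‖ ≤ lam := by
    intro z hz
    refine le_of_forall_pos_le_add fun ε hε => ?_
    have := Complex.norm_dslope_le_div_of_mapsTo_ball (c := 0) (R₁ := 1) (R₂ := lam + ε)
      (f := P1) (hP1A.differentiableOn) ?_ hz
    · simpa using this
    · intro w hw
      rw [mem_closedBall, dist_eq_norm, hP10, sub_zero]
      exact (lt_of_le_of_lt (hP1le w hw) (by linarith)).le
  have hPz2 : ∀ z : ℂ, P z = z ^ 2 * P2 z := by
    intro z
    have e1 : z • P1 z = P z := by simpa [hP0] using sub_smul_dslope P 0 z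
    have e2 : z • P2 z = P1 z := by simpa [hP10] using sub_smul_dslope P1 0 z
    rw [← e1, ← e2]
    simp [smul_eq_mul]; ring
  -- the coefficient fact : deriv g 0 = -(a 2)
  have hdg0 : deriv g 0 = -(a 2) := by
    obtain ⟨p, hp⟩ := hf 0 h0ball
    have hph : HasFPowerSeriesAt h p.fslope 0 := by
      rw [hh]; exact hp.has_fpower_series_dslope_fslope
    have hdh : deriv h 0 = p.coeff 2 := by
      rw [hph.deriv]
      show p.fslope.coeff 1 = p.coeff 2
      rw [FormalMultilinearSeries.coeff_fslope]
    have hitd : iteratedDeriv 2 f 0 = 2 * p.coeff 2 := by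
      obtain ⟨R, hR⟩ := hp
      have := hR.factorial_smul (y := (1:ℂ)) 2
      rw [iteratedDeriv_eq_iteratedFDeriv, ← this]
      show ((2:ℕ).factorial : ℕ) • p.coeff 2 = 2 * p.coeff 2
      simp [Nat.factorial]
    have ha2 : a 2 = p.coeff 2 := by
      rw [ha 2, hitd]
      norm_num [Nat.factorial]
    have dh : HasDerivAt h (deriv h 0) 0 := ((hhA 0 h0ball).differentiableAt).hasDerivAt
    have dgi : HasDerivAt g (-(deriv h 0) / h 0 ^ 2) 0 := dh.inv (by rw [hh0]; exact one_ne_zero)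
    rw [dgi.deriv, hh0, hdh, ha2]
    simp
  -- ω
  set r : ℂ → ℂ := fun z => (1 - a 2 * z - g z) / lam with hr
  have hrA : AnalyticOnNhd ℂ r (ball 0 1) := by
    intro z hz
    exact ((analyticAt_const.sub (analyticAt_const.mul analyticAt_id)).sub (hgA z hz)).div
      analyticAt_const (by exact_mod_cast hlam0.ne')
  have hr0 : r 0 = 0 := by rw [hr]; simp [hg0]
  set ω : ℂ → ℂ := dslope r 0 with hω
  have hωA : AnalyticOnNhd ℂ ω (ball 0 1) := aux_dslope_analytic hrA hr0
  have hω0 : ω 0 = 0 := by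
    rw [hω, dslope_same, hr]
    have : deriv (fun z => (1 - a 2 * z - g z) / ↑lam) 0
        = (deriv (fun z => 1 - a 2 * z - g z) 0) / lam := by
      simp [div_eq_mul_inv, deriv_mul_const_field]
    rw [this]
    have hd : deriv (fun z => 1 - a 2 * z - g z) 0 = -(a 2) - deriv g 0 := by
      have d1 : HasDerivAt g (deriv g 0) 0 := ((hgA 0 h0ball).differentiableAt).hasDerivAt
      have p1 : HasDerivAt (fun w : ℂ => 1 - a 2 * w) (-(a 2 * 1)) 0 :=
        ((hasDerivAt_id 0).const_mul (a 2)).const_sub 1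
      have p2 := p1.sub d1
      refine p2.deriv.trans ?_
      ring
    rw [hd, hdg0]
    simp
  have hωz : ∀ z : ℂ, z ≠ 0 → ω z = r z / z := by
    intro z hz0
    rw [hω, dslope_of_ne _ hz0, slope_def_field, hr0, sub_zero, sub_zero]
  -- identity
  have hident : ∀ z ∈ ball (0:ℂ) 1, z ≠ 0 → z / f z = 1 - a 2 * z - (lam : ℂ) * z * ω z := by
    intro z hz hz0
    rw [hωz z hz0, ← hgz z hz hz0, hr]
    have hlamne : (lam : ℂ) ≠ 0 := by exact_mod_cast hlam0.ne'
    field_simp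
    ring
  -- derivative of ω equals P2 / lam on punctured ball
  have hderivω : ∀ z ∈ ball (0:ℂ) 1, z ≠ 0 → deriv ω z = P2 z / lam := by
    intro z hz hz0
    have hlamne : (lam : ℂ) ≠ 0 := by exact_mod_cast hlam0.ne'
    have heq : ω =ᶠ[nhds z] fun w => r w / w := by
      filter_upwards [eventually_ne_nhds hz0] with w hw
      exact hωz w hw
    have dg : HasDerivAt g (deriv g z) z := ((hgA z hz).differentiableAt).hasDerivAt
    have p1 : HasDerivAt (fun w : ℂ => 1 - a 2 * w) (-(a 2 * 1)) z :=
      ((hasDerivAt_id z).const_mul (a 2)).const_sub 1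
    have dr : HasDerivAt r ((-(a 2 * 1) - deriv g z) / (lam : ℂ)) z := (p1.sub dg).div_const _
    have dq : HasDerivAt (fun w => r w / w)
        (((-(a 2 * 1) - deriv g z) / (lam : ℂ) * z - r z * 1) / z ^ 2) z :=
      dr.div (hasDerivAt_id z) hz0
    have hP2z : P2 z = P z / z ^ 2 := by
      rw [hPz2 z]
      field_simp
    rw [heq.deriv_eq, dq.deriv, hP2z, hP, hr]
    field_simp
    ring
  have hdω : ∀ z ∈ ball (0:ℂ) 1, ‖deriv ω z‖ ≤ 1 := by
    intro z hz
    rcases eq_or_ne z 0 with rfl | hz0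
    · -- limit argument
      have hcont : ContinuousAt (deriv ω) 0 := ((hωA.deriv) 0 h0ball).continuousAt
      have htend : Tendsto (deriv ω) (𝓝[≠] (0:ℂ)) (𝓝 (deriv ω 0)) :=
        hcont.continuousWithinAt.tendsto
      refine le_of_tendsto (htend.norm) ?_
      have hball : ∀ᶠ w in 𝓝[≠] (0:ℂ), w ∈ ball (0:ℂ) 1 ∧ w ≠ 0 := by
        filter_upwards [nhdsWithin_le_nhds (isOpen_ball.eventually_mem h0ball),
          self_mem_nhdsWithin] with w h1 h2
        exact ⟨h1, h2⟩
      filter_upwards [hball] with w ⟨hw1, hw2⟩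
      rw [hderivω w hw1 hw2, norm_div, Complex.norm_real, Real.norm_eq_abs, abs_of_pos hlam0,
        div_le_one hlam0]
      exact hP2le w hw1
    · rw [hderivω z hz hz0, norm_div, Complex.norm_real, Real.norm_eq_abs, abs_of_pos hlam0,
        div_le_one hlam0]
      exact hP2le z hz
  -- |ω z| ≤ |z|
  have hωbd : ∀ z ∈ ball (0:ℂ) 1, ‖ω z‖ ≤ ‖z‖ := by
    intro z hz
    have := Convex.norm_image_sub_le_of_norm_deriv_le (f := ω) (s := ball (0:ℂ) 1)
      (fun x hx => ((hωA x hx).differentiableAt)) hdω (convex_ball 0 1) h0ball hz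
    simpa [hω0] using this
  exact ⟨ω, hωA, hωbd, hdω, hident⟩
end

section
/- For 0 < λ ≤ 1, the function f_λ(z) = z/((1−z)(1−λz)) has Taylor expansion f_λ(z) = Σₙ≥₁ ((1 − λⁿ)/(1 − λ)) zⁿ for 0 < λ < 1 (and coefficients n when λ = 1), and f_λ belongs to 𝒰(λ). -/
open Complex Metric

private lemma denom_ne_zero {lam : ℝ} (hlam0 : 0 < lam) (hlam1 : lam ≤ 1) {z : ℂ}
    (hz : ‖z‖ < 1) : (1 - z ≠ 0) ∧ (1 - (lam:ℂ) * z ≠ 0) := by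
  constructor
  · intro h
    have : z = 1 := by linear_combination -h
    rw [this] at hz; simp at hz
  · intro h
    have h1 : (lam:ℂ) * z = 1 := by linear_combination -h
    have : ‖(lam:ℂ) * z‖ < 1 := by
      rw [norm_mul, Complex.norm_real, Real.norm_of_nonneg hlam0.le]
      calc lam * ‖z‖ ≤ 1 * ‖z‖ := by nlinarith [norm_nonneg z]
        _ < 1 := by simpa using hz
    rw [h1] at this; simp at this

private lemma hasDerivAt_fl {lam : ℝ} (fl : ℂ → ℂ)
    (hfl : ∀ z, fl z = z / ((1 - z) * (1 - (lam:ℂ) * z))) {z : ℂ}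
    (hne : (1 - z) * (1 - (lam:ℂ) * z) ≠ 0) :
    HasDerivAt fl
      ((1 * ((1 - z) * (1 - (lam:ℂ) * z)) -
        z * ((-1) * (1 - (lam:ℂ) * z) + (1 - z) * (-(lam:ℂ)))) /
        ((1 - z) * (1 - (lam:ℂ) * z)) ^ 2) z := by
  have h1 : HasDerivAt (fun w : ℂ => 1 - w) (-1 : ℂ) z := by
    simpa using (hasDerivAt_id z).const_sub 1
  have h2 : HasDerivAt (fun w : ℂ => 1 - (lam:ℂ) * w) (-(lam:ℂ)) z := by
    simpa using ((hasDerivAt_id z).const_mul (lam:ℂ)).const_sub 1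
  have hD := h1.mul h2
  have := (hasDerivAt_id z).div hD hne
  have hfeq : fl = fun w : ℂ => w / ((1 - w) * (1 - (lam:ℂ) * w)) := funext hfl
  rw [hfeq]
  exact this

theorem f_lambda_properties (fl : ℂ → ℂ) (lam : ℝ) (hlam0 : 0 < lam) (hlam1 : lam ≤ 1)
    (hfl : ∀ z, fl z = z / ((1 - z) * (1 - (lam:ℂ) * z))) :
    (lam < 1 → ∀ z ∈ ball (0:ℂ) 1,
      fl z = ∑' n : ℕ, (((1 - lam ^ n) / (1 - lam) : ℝ) : ℂ) * z ^ n) ∧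
    (lam = 1 → ∀ z ∈ ball (0:ℂ) 1, fl z = ∑' n : ℕ, (n : ℂ) * z ^ n) ∧
    (AnalyticOnNhd ℂ fl (ball 0 1) ∧ fl 0 = 0 ∧ deriv fl 0 = 1 ∧
      ∀ z ∈ ball (0:ℂ) 1, z ≠ 0 → ‖(z / fl z) ^ 2 * deriv fl z - 1‖ < lam) := by
  refine ⟨?_, ?_, ?_, ?_, ?_, ?_⟩
  · -- Taylor expansion for lam < 1
    intro hl z hz
    rw [mem_ball_zero_iff] at hz
    obtain ⟨hz1, hz2⟩ := denom_ne_zero hlam0 hlam1 hz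
    have hlz : ‖(lam:ℂ) * z‖ < 1 := by
      rw [norm_mul, Complex.norm_real, Real.norm_of_nonneg hlam0.le]
      calc lam * ‖z‖ ≤ 1 * ‖z‖ := by nlinarith [norm_nonneg z]
        _ < 1 := by simpa using hz
    have hl1 : (1:ℂ) - (lam:ℂ) ≠ 0 := by
      intro h
      have : (lam:ℂ) = 1 := by linear_combination -h
      have : lam = 1 := by exact_mod_cast this
      linarith
    have hs1 : Summable (fun n : ℕ => z ^ n) := summable_geometric_of_norm_lt_one hz
    have hs2 : Summable (fun n : ℕ => ((lam:ℂ) * z) ^ n) := summable_geometric_of_norm_lt_one hlz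
    have hterm : ∀ n : ℕ, (((1 - lam ^ n) / (1 - lam) : ℝ) : ℂ) * z ^ n =
        (1 / (1 - (lam:ℂ))) * (z ^ n - ((lam:ℂ) * z) ^ n) := by
      intro n
      push_cast
      rw [mul_pow]
      field_simp
    rw [tsum_congr hterm, tsum_mul_left, Summable.tsum_sub hs1 hs2,
      tsum_geometric_of_norm_lt_one hz, tsum_geometric_of_norm_lt_one hlz, hfl]
    have hz2' : 1 - z * (lam:ℂ) ≠ 0 := by rwa [mul_comm]
    field_simp
    ring
  · -- Taylor expansion for lam = 1
    intro hl z hz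
    rw [mem_ball_zero_iff] at hz
    obtain ⟨hz1, _⟩ := denom_ne_zero hlam0 hlam1 hz
    rw [tsum_coe_mul_geometric_of_norm_lt_one hz, hfl, hl]
    push_cast
    congr 1
    ring
  · -- analytic
    have hfeq : fl = fun w : ℂ => w / ((1 - w) * (1 - (lam:ℂ) * w)) := funext hfl
    rw [hfeq]
    apply AnalyticOnNhd.div
    · exact analyticOnNhd_id
    · exact ((analyticOnNhd_const.sub analyticOnNhd_id).mul
        (analyticOnNhd_const.sub (analyticOnNhd_const.mul analyticOnNhd_id)))
    · intro z hz
      rw [mem_ball_zero_iff] at hz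
      obtain ⟨hz1, hz2⟩ := denom_ne_zero hlam0 hlam1 hz
      exact mul_ne_zero hz1 hz2
  · simp [hfl]
  · -- deriv at 0
    have hne : (1 - (0:ℂ)) * (1 - (lam:ℂ) * 0) ≠ 0 := by simp
    have := (hasDerivAt_fl fl hfl hne).deriv
    rw [this]
    simp
  · -- the U(lam) inequality
    intro z hz hz0
    rw [mem_ball_zero_iff] at hz
    obtain ⟨hz1, hz2⟩ := denom_ne_zero hlam0 hlam1 hz
    have hne : (1 - z) * (1 - (lam:ℂ) * z) ≠ 0 := mul_ne_zero hz1 hz2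
    have hd := (hasDerivAt_fl fl hfl hne).deriv
    have hflz : fl z = z / ((1 - z) * (1 - (lam:ℂ) * z)) := hfl z
    have hflne : fl z ≠ 0 := by
      rw [hflz]
      exact div_ne_zero hz0 hne
    have key : (z / fl z) ^ 2 * deriv fl z - 1 = -(lam:ℂ) * z ^ 2 := by
      have hz2' : 1 - z * (lam:ℂ) ≠ 0 := by rwa [mul_comm]
      rw [hd, hflz]
      field_simp
      ring
    rw [key]
    have : ‖-(lam:ℂ) * z ^ 2‖ = lam * ‖z‖ ^ 2 := by
      rw [norm_mul, norm_neg, Complex.norm_real, Real.norm_of_nonneg hlam0.le, norm_pow]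
    rw [this]
    have h2 : ‖z‖ ^ 2 < 1 := by nlinarith [norm_nonneg z]
    calc lam * ‖z‖ ^ 2 < lam * 1 := by exact mul_lt_mul_of_pos_left h2 hlam0
      _ = lam := mul_one _
end

section
/- Let f ∈ 𝒰(λ), 0 < λ ≤ 1, with f(z) = z + a₂z² + a₃z³ + ... . Then |a₂² − a₃| ≤ λ, and this bound is attained by f_λ(z) = z/((1−z)(1−λz)). -/
open Complex Metric

lemma zal_mulz {G F : ℂ → ℂ} {r : ℝ} (hr : 0 < r)
    (hG : AnalyticOnNhd ℂ G (ball 0 r)) (hFG : ∀ z ∈ ball (0:ℂ) r, F z = z * G z) :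
    Set.EqOn (deriv F) (fun z => G z + z * deriv G z) (ball 0 r) ∧
    iteratedDeriv 2 F 0 = 2 * deriv G 0 ∧
    iteratedDeriv 3 F 0 = 3 * deriv (deriv G) 0 := by
  have hop : IsOpen (ball (0:ℂ) r) := isOpen_ball
  have h0 : (0:ℂ) ∈ ball (0:ℂ) r := mem_ball_self hr
  have hG1 : AnalyticOnNhd ℂ (deriv G) (ball 0 r) := hG.deriv
  have hG2 : AnalyticOnNhd ℂ (deriv (deriv G)) (ball 0 r) := hG1.deriv
  have key1 : Set.EqOn (deriv F) (fun z => G z + z * deriv G z) (ball 0 r) := by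
    intro z hz
    have h1 : HasDerivAt (fun w => w * G w) (1 * G z + z * deriv G z) z :=
      (hasDerivAt_id z).mul (hG z hz).differentiableAt.hasDerivAt
    have h2 : HasDerivAt F (1 * G z + z * deriv G z) z := by
      refine h1.congr_of_eventuallyEq ?_
      filter_upwards [hop.mem_nhds hz] with w hw
      exact hFG w hw
    rw [h2.deriv]; ring
  have hD1 : ∀ z ∈ ball (0:ℂ) r,
      HasDerivAt (fun z => G z + z * deriv G z)
        (deriv G z + (1 * deriv G z + z * deriv (deriv G) z)) z := fun z hz =>
    ((hG z hz).differentiableAt.hasDerivAt).add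
      ((hasDerivAt_id z).mul (hG1 z hz).differentiableAt.hasDerivAt)
  have key2 : Set.EqOn (deriv (deriv F))
      (fun z => 2 * deriv G z + z * deriv (deriv G) z) (ball 0 r) := by
    intro z hz
    have e1 : deriv (deriv F) z = deriv (fun z => G z + z * deriv G z) z :=
      (Filter.eventuallyEq_of_mem (hop.mem_nhds hz) key1).deriv_eq
    rw [e1, (hD1 z hz).deriv]; ring
  refine ⟨key1, ?_, ?_⟩
  · rw [show (2:ℕ) = 1 + 1 from rfl, iteratedDeriv_succ, iteratedDeriv_one]
    rw [(Filter.eventuallyEq_of_mem (hop.mem_nhds h0) key1).deriv_eq, (hD1 0 h0).deriv]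
    ring
  · rw [show (3:ℕ) = (1 + 1) + 1 from rfl, iteratedDeriv_succ, iteratedDeriv_succ,
      iteratedDeriv_one]
    rw [(Filter.eventuallyEq_of_mem (hop.mem_nhds h0) key2).deriv_eq]
    have hD2 : HasDerivAt (fun z => 2 * deriv G z + z * deriv (deriv G) z)
        (2 * deriv (deriv G) 0 + (1 * deriv (deriv G) 0 + 0 * deriv (deriv (deriv G)) 0)) 0 :=
      (((hG1 0 h0).differentiableAt.hasDerivAt).const_mul 2).add
        ((hasDerivAt_id 0).mul (hG2 0 h0).differentiableAt.hasDerivAt)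
    rw [hD2.deriv]; ring

lemma zal_cauchy (H : ℂ → ℂ) (lam : ℝ)
    (hHa : AnalyticOnNhd ℂ H (ball 0 1))
    (hHb : ∀ z ∈ ball (0:ℂ) 1, ‖H z‖ ≤ lam) :
    ‖iteratedDeriv 2 H 0‖ ≤ 2 * lam := by
  have key : ∀ r : ℝ, 0 < r → r < 1 → ‖iteratedDeriv 2 H 0‖ * r ^ 2 ≤ 2 * lam := by
    intro r hr hr1
    obtain ⟨R, rfl⟩ : ∃ R : NNReal, (R:ℝ) = r := ⟨⟨r, hr.le⟩, rfl⟩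
    have hRpos : 0 < R := by exact_mod_cast hr
    have hdiff : DifferentiableOn ℂ H (closedBall 0 (R:ℝ)) :=
      (hHa.differentiableOn).mono (closedBall_subset_ball hr1)
    have hps : HasFPowerSeriesOnBall H (cauchyPowerSeries H 0 (R:ℝ)) 0 R :=
      hdiff.hasFPowerSeriesOnBall hRpos
    have hco := hps.factorial_smul (1:ℂ) 2
    have hid : iteratedDeriv 2 H 0 = iteratedFDeriv ℂ 2 H 0 (fun _ => 1) :=
      iteratedDeriv_eq_iteratedFDeriv
    have hnormc : ‖iteratedDeriv 2 H 0‖ =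
        2 * ‖(cauchyPowerSeries H 0 (R:ℝ) 2) (fun _ => (1:ℂ))‖ := by
      rw [hid, ← hco]
      rw [nsmul_eq_mul]
      rw [norm_mul]
      norm_num [Nat.factorial]
    have hb1 : ‖(cauchyPowerSeries H 0 (R:ℝ) 2) (fun _ => (1:ℂ))‖ ≤
        ‖cauchyPowerSeries H 0 (R:ℝ) 2‖ := by
      simpa using (cauchyPowerSeries H 0 (R:ℝ) 2).le_opNorm (fun _ => (1:ℂ))
    have hmem : ∀ θ : ℝ, circleMap 0 (R:ℝ) θ ∈ ball (0:ℂ) 1 := by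
      intro θ
      rw [mem_ball_zero_iff]
      have : ‖circleMap 0 (R:ℝ) θ‖ = |(R:ℝ)| := norm_circleMap_zero (R:ℝ) θ
      rw [this, abs_of_pos hr]
      exact hr1
    have hcont : Continuous fun θ : ℝ => ‖H (circleMap 0 (R:ℝ) θ)‖ :=
      ((hHa.continuousOn).comp_continuous (continuous_circleMap 0 (R:ℝ)) hmem).norm
    have hint : (∫ θ in (0:ℝ)..2*Real.pi, ‖H (circleMap 0 (R:ℝ) θ)‖) ≤
        ∫ _ in (0:ℝ)..2*Real.pi, lam := by
      apply intervalIntegral.integral_mono_on Real.two_pi_pos.le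
        (hcont.intervalIntegrable _ _) intervalIntegrable_const
      intro θ _
      exact hHb _ (hmem θ)
    have hIc : (∫ _ in (0:ℝ)..2*Real.pi, lam) = 2*Real.pi*lam := by
      simp [intervalIntegral.integral_const]
    have hb2 := norm_cauchyPowerSeries_le H 0 (R:ℝ) 2
    have hb3 : ‖cauchyPowerSeries H 0 (R:ℝ) 2‖ ≤ lam * ((R:ℝ)⁻¹)^2 := by
      refine hb2.trans ?_
      rw [abs_of_pos hr]
      apply mul_le_mul_of_nonneg_right _ (by positivity)
      calc (2*Real.pi)⁻¹ * ∫ θ in (0:ℝ)..2*Real.pi, ‖H (circleMap 0 (R:ℝ) θ)‖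
          ≤ (2*Real.pi)⁻¹ * (2*Real.pi*lam) := by
            apply mul_le_mul_of_nonneg_left _ (by positivity)
            rw [← hIc]; exact hint
        _ = lam := by field_simp
    have : ‖iteratedDeriv 2 H 0‖ ≤ 2 * (lam * ((R:ℝ)⁻¹)^2) := by
      rw [hnormc]
      have := hb1.trans hb3
      linarith
    calc ‖iteratedDeriv 2 H 0‖ * (R:ℝ)^2 ≤ 2 * (lam * ((R:ℝ)⁻¹)^2) * (R:ℝ)^2 := by
          apply mul_le_mul_of_nonneg_right this (by positivity)
      _ = 2 * lam := by field_simp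
  have hlim : Filter.Tendsto (fun r : ℝ => ‖iteratedDeriv 2 H 0‖ * r ^ 2)
      (nhdsWithin 1 (Set.Iio 1)) (nhds (‖iteratedDeriv 2 H 0‖ * 1 ^ 2)) :=
    ((continuous_const.mul (continuous_pow 2)).tendsto 1).mono_left nhdsWithin_le_nhds
  have hev : ∀ᶠ r in nhdsWithin (1:ℝ) (Set.Iio 1), ‖iteratedDeriv 2 H 0‖ * r ^ 2 ≤ 2 * lam := by
    filter_upwards [Ioo_mem_nhdsLT_of_mem (show (1:ℝ) ∈ Set.Ioc (0:ℝ) 1 from ⟨one_pos, le_refl 1⟩)]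
      with r hr
    exact key r hr.1 hr.2
  have := le_of_tendsto hlim hev
  simpa using this

lemma zal_deriv2H (g : ℂ → ℂ) (hga : AnalyticOnNhd ℂ g (ball 0 1)) (hg0 : g 0 = 1)
    (hgne : ∀ z ∈ ball (0:ℂ) 1, g z ≠ 0) :
    deriv (deriv (fun z => (g z + z * deriv g z) / (g z) ^ 2 - 1)) 0 =
      deriv (deriv g) 0 - 2 * (deriv g 0) ^ 2 := by
  have h0 : (0:ℂ) ∈ ball (0:ℂ) 1 := mem_ball_self one_pos
  have hga1 : AnalyticOnNhd ℂ (deriv g) (ball 0 1) := hga.deriv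
  have hga2 : AnalyticOnNhd ℂ (deriv (deriv g)) (ball 0 1) := hga1.deriv
  have hEqH : Set.EqOn (deriv (fun z => (g z + z * deriv g z) / (g z) ^ 2 - 1))
      (fun z => ((deriv g z + (1 * deriv g z + z * deriv (deriv g) z)) * g z ^ 2 -
        (g z + z * deriv g z) * ((2:ℕ) * g z ^ (2-1) * deriv g z)) / ((g z ^ 2) ^ 2))
      (ball 0 1) := by
    intro z hz
    have hnum : HasDerivAt (fun w => g w + w * deriv g w)
        (deriv g z + (1 * deriv g z + z * deriv (deriv g) z)) z :=
      ((hga z hz).differentiableAt.hasDerivAt).add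
        ((hasDerivAt_id z).mul (hga1 z hz).differentiableAt.hasDerivAt)
    have hden := ((hga z hz).differentiableAt.hasDerivAt).pow 2
    exact ((hnum.div hden (pow_ne_zero 2 (hgne z hz))).sub_const 1).deriv
  rw [(Filter.eventuallyEq_of_mem (isOpen_ball.mem_nhds h0) hEqH).deriv_eq]
  have hg' : HasDerivAt g (deriv g 0) 0 := (hga 0 h0).differentiableAt.hasDerivAt
  have hg1' : HasDerivAt (deriv g) (deriv (deriv g) 0) 0 := (hga1 0 h0).differentiableAt.hasDerivAt
  have hg2' : HasDerivAt (deriv (deriv g)) (deriv (deriv (deriv g)) 0) 0 :=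
    (hga2 0 h0).differentiableAt.hasDerivAt
  have hA := hg1'.add (((hasDerivAt_const (0:ℂ) (1:ℂ)).mul hg1').add
    ((hasDerivAt_id (0:ℂ)).mul hg2'))
  have hB := hg'.pow 2
  have hP1 := hA.mul hB
  have hC := hg'.add ((hasDerivAt_id (0:ℂ)).mul hg1')
  have hD2 := ((hasDerivAt_const (0:ℂ) ((2:ℕ):ℂ)).mul (hg'.pow 1)).mul hg1'
  have hP := hP1.sub (hC.mul hD2)
  have hQ := hB.pow 2
  have hPhi := hP.div hQ (by simp [hg0])
  refine hPhi.deriv.trans ?_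
  simp [hg0]
  ring

theorem zalcman_n2_U_lambda (f fl : ℂ → ℂ) (lam : ℝ) (hlam0 : 0 < lam) (hlam1 : lam ≤ 1)
    (hf : AnalyticOnNhd ℂ f (ball 0 1)) (hf0 : f 0 = 0) (hf1 : deriv f 0 = 1)
    (hU : ∀ z ∈ ball (0:ℂ) 1, z ≠ 0 → ‖(z / f z) ^ 2 * deriv f z - 1‖ < lam)
    (a : ℕ → ℂ) (ha : ∀ n, a n = iteratedDeriv n f 0 / n.factorial)
    (hfl : ∀ z, fl z = z / ((1 - z) * (1 - (lam:ℂ) * z)))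
    (b : ℕ → ℂ) (hb : ∀ n, b n = iteratedDeriv n fl 0 / n.factorial) :
    ‖(a 2) ^ 2 - a 3‖ ≤ lam ∧ ‖(b 2) ^ 2 - b 3‖ = lam := by
  constructor
  · -- Part 1
    have h0 : (0:ℂ) ∈ ball (0:ℂ) 1 := mem_ball_self one_pos
    obtain ⟨p, hp⟩ := hf 0 h0
    set g : ℂ → ℂ := dslope f 0 with hgdef
    have hg0 : g 0 = 1 := by rw [hgdef, dslope_same, hf1]
    have hfg : ∀ z, f z = z * g z := by
      intro z
      have := sub_smul_dslope f 0 z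
      simp only [sub_zero, hf0, smul_eq_mul] at this
      rw [hgdef, this]
    have hga : AnalyticOnNhd ℂ g (ball 0 1) := by
      intro z hz
      by_cases hz0 : z = 0
      · subst hz0; exact hp.has_fpower_series_dslope_fslope.analyticAt
      · have h1 : AnalyticAt ℂ (fun w : ℂ => w⁻¹ * f w) z :=
          ((analyticAt_id (𝕜 := ℂ)).inv hz0).mul (hf z hz)
        refine h1.congr ?_
        have hopen : {w : ℂ | w ≠ 0} ∈ nhds z := isOpen_compl_singleton.mem_nhds hz0
        filter_upwards [hopen] with w hw
        rw [hgdef, dslope_of_ne f hw, slope_def_field]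
        field_simp [hf0]
        rw [hf0]; ring
    have hgne : ∀ z ∈ ball (0:ℂ) 1, g z ≠ 0 := by
      intro z hz
      by_cases hz0 : z = 0
      · rw [hz0, hg0]; norm_num
      · intro hgz
        have hfz : f z = 0 := by rw [hfg z, hgz, mul_zero]
        have := hU z hz hz0
        rw [hfz, div_zero] at this
        norm_num at this
        linarith
    obtain ⟨hdf, hit2, hit3⟩ := zal_mulz one_pos hga (fun z _ => hfg z)
    have hHa : AnalyticOnNhd ℂ (fun z => (g z + z * deriv g z) / (g z) ^ 2 - 1) (ball 0 1) := by
      intro z hz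
      exact (((hga z hz).add ((analyticAt_id (𝕜 := ℂ)).mul (hga.deriv z hz))).div
        ((hga z hz).pow 2) (pow_ne_zero 2 (hgne z hz))).sub analyticAt_const
    have hHb : ∀ z ∈ ball (0:ℂ) 1, ‖(g z + z * deriv g z) / (g z) ^ 2 - 1‖ ≤ lam := by
      intro z hz
      by_cases hz0 : z = 0
      · rw [hz0]; simp [hg0]; linarith
      · have h1 : (g z + z * deriv g z) / (g z) ^ 2 - 1 = (z / f z) ^ 2 * deriv f z - 1 := by
          rw [hdf hz]
          simp only
          rw [hfg z]
          have hgz := hgne z hz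
          field_simp
        rw [h1]
        exact (hU z hz hz0).le
    have hcle : ‖iteratedDeriv 2 (fun z => (g z + z * deriv g z) / (g z) ^ 2 - 1) 0‖ ≤ 2 * lam :=
      zal_cauchy _ lam hHa hHb
    have hc : iteratedDeriv 2 (fun z => (g z + z * deriv g z) / (g z) ^ 2 - 1) 0 =
        deriv (deriv g) 0 - 2 * (deriv g 0) ^ 2 := by
      rw [show (2:ℕ) = 1 + 1 from rfl, iteratedDeriv_succ, iteratedDeriv_one]
      exact zal_deriv2H g hga hg0 hgne
    rw [hc] at hcle
    have hfinal : a 2 ^ 2 - a 3 =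
        -((deriv (deriv g) 0 - 2 * (deriv g 0) ^ 2) / 2) := by
      rw [ha 2, ha 3, hit2, hit3]
      norm_num [Nat.factorial]
      ring
    rw [hfinal, norm_neg, norm_div]
    simp only [Complex.norm_ofNat]
    linarith
  · -- Part 2
    set L : ℂ := (lam:ℂ) with hL
    have hne : ∀ z ∈ ball (0:ℂ) (1/2), (1 - z) * (1 - L * z) ≠ 0 := by
      intro z hz
      rw [mem_ball_zero_iff] at hz
      have h1 : (1 - z) ≠ 0 := by
        intro h; apply absurd hz; rw [show z = 1 by linear_combination -h]; norm_num
      have h2 : (1 - L * z) ≠ 0 := by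
        intro h
        have : ‖L * z‖ < 1/2 := by
          rw [norm_mul]
          calc ‖L‖ * ‖z‖ ≤ 1 * ‖z‖ := by
                apply mul_le_mul_of_nonneg_right _ (norm_nonneg z)
                simp [hL, abs_of_pos hlam0, hlam1]
            _ < 1/2 := by simpa using hz
        have hz1 : L * z = 1 := by linear_combination -h
        rw [hz1] at this; norm_num at this
      exact mul_ne_zero h1 h2
    have hq : AnalyticOnNhd ℂ (fun z => ((1 - z) * (1 - L * z))⁻¹) (ball 0 (1/2)) := by
      intro z hz
      exact (((analyticAt_const (v := (1:ℂ))).sub analyticAt_id).mul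
        ((analyticAt_const (v := (1:ℂ))).sub (analyticAt_const.mul analyticAt_id))).inv (hne z hz)
    have hflq : ∀ z ∈ ball (0:ℂ) (1/2), fl z = z * ((1 - z) * (1 - L * z))⁻¹ := by
      intro z _; rw [hfl z, div_eq_mul_inv]
    obtain ⟨_, h2, h3⟩ := zal_mulz (by norm_num) hq hflq
    have hu : ∀ z : ℂ, HasDerivAt (fun w => (1 - w) * (1 - L * w)) (-(1 - L*z) - L*(1 - z)) z := by
      intro z
      have ha' : HasDerivAt (fun w : ℂ => 1 - w) (-1) z := by
        simpa using (hasDerivAt_id z).const_sub 1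
      have hb' : HasDerivAt (fun w : ℂ => 1 - L * w) (-L) z := by
        simpa using ((hasDerivAt_id z).const_mul L).const_sub 1
      have := ha'.mul hb'
      exact this.congr_deriv (by ring)
    have hqd : ∀ z ∈ ball (0:ℂ) (1/2),
        HasDerivAt (fun w => ((1 - w) * (1 - L * w))⁻¹)
          (-(-(1 - L*z) - L*(1 - z)) / ((1 - z) * (1 - L * z)) ^ 2) z := by
      intro z hz; exact (hu z).inv (hne z hz)
    have hEq : Set.EqOn (deriv (fun z => ((1 - z) * (1 - L * z))⁻¹))
        (fun z => -(-(1 - L*z) - L*(1 - z)) / ((1 - z) * (1 - L * z)) ^ 2) (ball 0 (1/2)) := by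
      intro z hz; exact (hqd z hz).deriv
    have h0 : (0:ℂ) ∈ ball (0:ℂ) (1/2) := mem_ball_self (by norm_num)
    have hd1 : deriv (fun z => ((1 - z) * (1 - L * z))⁻¹) 0 = 1 + L := by
      rw [hEq h0]; simp; ring
    have hd2 : deriv (deriv (fun z => ((1 - z) * (1 - L * z))⁻¹)) 0 = 2*(1+L)^2 - 2*L := by
      have he : deriv (deriv (fun z => ((1 - z) * (1 - L * z))⁻¹)) 0 =
          deriv (fun z => -(-(1 - L*z) - L*(1 - z)) / ((1 - z) * (1 - L * z)) ^ 2) 0 :=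
        (Filter.eventuallyEq_of_mem (isOpen_ball.mem_nhds h0) hEq).deriv_eq
      rw [he]
      have hN : HasDerivAt (fun z : ℂ => -(-(1 - L*z) - L*(1 - z))) (-(2*L)) 0 := by
        have h1 : HasDerivAt (fun z : ℂ => -(1 - L*z) - L*(1 - z)) (2*L) 0 := by
          have ha' : HasDerivAt (fun z : ℂ => -(1 - L*z)) L 0 := by
            exact (((hasDerivAt_id (0:ℂ)).const_mul L).const_sub 1).neg.congr_deriv (by ring)
          have hb' : HasDerivAt (fun z : ℂ => L*(1 - z)) (-L) 0 := by
            simpa using (((hasDerivAt_id (0:ℂ)).const_sub 1).const_mul L)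
          have := ha'.sub hb'
          exact this.congr_deriv (by ring)
        exact h1.neg
      have hD : HasDerivAt (fun z : ℂ => ((1 - z) * (1 - L * z)) ^ 2)
          ((2:ℂ) * ((1 - (0:ℂ)) * (1 - L * 0)) ^ (2-1) * (-(1 - L*0) - L*(1 - 0))) 0 :=
        (hu 0).pow 2
      have hdiv := hN.div hD (by norm_num)
      rw [(show HasDerivAt (fun z : ℂ => -(-(1 - L*z) - L*(1 - z)) / ((1 - z) * (1 - L * z)) ^ 2) _ 0 from hdiv).deriv]
      norm_num
      ring
    have hb2 : b 2 = 1 + L := by rw [hb 2, h2, hd1]; norm_num [Nat.factorial]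
    have hb3 : b 3 = (1+L)^2 - L := by
      rw [hb 3, h3, hd2]; norm_num [Nat.factorial]; ring
    have : (b 2)^2 - b 3 = L := by rw [hb2, hb3]; ring
    rw [this, hL, Complex.norm_real, Real.norm_eq_abs, abs_of_pos hlam0]
end

section
/- Let f ∈ 𝒰(λ), 0 < λ ≤ 1, with f(z) = z + a₂z² + ... . Then |a₄ − a₂³| ≤ 2λ(1 + λ), with equality for f_λ(z) = z/((1−z)(1−λz)). -/
open Complex Metric FormalMultilinearSeries Finset



theorem KL0 {g : ℂ → ℂ} {p : FormalMultilinearSeries ℂ ℂ ℂ}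
    (h : HasFPowerSeriesAt g p 0) (n : ℕ) :
    iteratedDeriv n g 0 = n.factorial * p.coeff n := by
  obtain ⟨r, hr⟩ := h
  have := hr.factorial_smul (1 : ℂ) n
  rw [iteratedDeriv_eq_iteratedFDeriv]
  rw [← this, nsmul_eq_mul]
  rfl

theorem KL1 {g : ℂ → ℂ} (hg : AnalyticAt ℂ g 0) (n : ℕ) :
    iteratedDeriv n (dslope g 0) 0 = iteratedDeriv (n+1) g 0 / (n+1) := by
  obtain ⟨p, hp⟩ := hg
  rw [KL0 (hp.has_fpower_series_dslope_fslope) n, KL0 hp (n+1), coeff_fslope]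
  have hne : ((n:ℂ) + 1) ≠ 0 := Nat.cast_add_one_ne_zero n
  rw [eq_div_iff hne]
  push_cast [Nat.factorial_succ]
  ring

theorem KL2 {g : ℂ → ℂ} (hg : AnalyticOnNhd ℂ g (ball 0 1)) :
    AnalyticOnNhd ℂ (dslope g 0) (ball 0 1) := by
  intro z hz
  by_cases h0 : z = 0
  · subst h0
    obtain ⟨p, hp⟩ := hg 0 hz
    exact hp.has_fpower_series_dslope_fslope.analyticAt
  · have hev : (fun w => w⁻¹ • (g w - g 0)) =ᶠ[nhds z] dslope g 0 := by
      filter_upwards [compl_singleton_mem_nhds h0] with w hw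
      rw [dslope_of_ne _ hw, slope_def_field]
      simp [div_eq_inv_mul, smul_eq_mul]
    exact ((((analyticAt_id.inv h0)).smul ((hg z hz).sub analyticAt_const))).congr hev



theorem normsq_helper (w : ℂ) : ‖w‖^2 = w.re^2 + w.im^2 := by
  rw [Complex.sq_norm, Complex.normSq_apply]; ring

/-- Schwarz–Pick bound on the derivative at 0 for a function bounded by L on the unit disk. -/
theorem KL3 {g : ℂ → ℂ} {L : ℝ} (hL : 0 < L) (hg : AnalyticOnNhd ℂ g (ball 0 1))
    (hb : ∀ z ∈ ball (0:ℂ) 1, ‖g z‖ ≤ L) :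
    ‖deriv g 0‖ ≤ (L^2 - ‖g 0‖^2) / L := by
  have h01 : (0:ℂ) ∈ ball (0:ℂ) 1 := mem_ball_self one_pos
  by_cases hc : ‖g 0‖ = L
  · -- maximum at interior point: g constant
    have heq := Complex.eqOn_of_isPreconnected_of_isMaxOn_norm
      (convex_ball (0:ℂ) 1).isPreconnected isOpen_ball hg.differentiableOn h01
      (fun z hz => by simpa [hc] using hb z hz)
    have hev : g =ᶠ[nhds (0:ℂ)] (fun _ => g 0) := by
      filter_upwards [isOpen_ball.mem_nhds h01] with w hw using heq hw
    rw [hev.deriv_eq, deriv_const]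
    simp [hc]
  · have hlt : ‖g 0‖ < L := lt_of_le_of_ne (hb 0 h01) hc
    set c := g 0 with hcdef
    set D : ℂ → ℂ := fun z => ((L^2 : ℝ) : ℂ) - (starRingEnd ℂ) c * g z with hD
    have hDne : ∀ z ∈ ball (0:ℂ) 1, D z ≠ 0 := by
      intro z hz
      have h1 : ‖(starRingEnd ℂ) c * g z‖ < L^2 := by
        rw [norm_mul, RCLike.norm_conj]
        calc ‖c‖ * ‖g z‖ ≤ ‖c‖ * L := by
              exact mul_le_mul_of_nonneg_left (hb z hz) (norm_nonneg _)
          _ < L * L := by exact mul_lt_mul_of_pos_right hlt hL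
          _ = L^2 := (sq L).symm
      intro h
      rw [sub_eq_zero] at h
      rw [← h] at h1
      simp only [Complex.norm_real, norm_pow] at h1
      rw [Real.norm_of_nonneg (by positivity)] at h1
      exact lt_irrefl _ h1
    set χ : ℂ → ℂ := fun z => ((L:ℝ) : ℂ) * (g z - c) / D z with hχ
    have hχan : AnalyticOnNhd ℂ χ (ball 0 1) := by
      apply AnalyticOnNhd.div
      · exact fun z hz => (analyticAt_const).mul (((hg z hz)).sub analyticAt_const)
      · exact fun z hz => (analyticAt_const).sub ((analyticAt_const).mul (hg z hz))
      · exact hDne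
    have hχb : ∀ z ∈ ball (0:ℂ) 1, ‖χ z‖ ≤ 1 := by
      intro z hz
      rw [hχ]
      have key : ‖((L:ℝ):ℂ) * (g z - c)‖ ≤ ‖D z‖ := by
        have h1 : ‖g z‖^2 ≤ L^2 := by
          have := hb z hz
          nlinarith [norm_nonneg (g z)]
        have h2 : ‖c‖^2 ≤ L^2 := by nlinarith [norm_nonneg c, hlt.le]
        have e1 : ‖((L:ℝ):ℂ) * (g z - c)‖^2 = L^2 * ((g z).re - c.re)^2 + L^2 * ((g z).im - c.im)^2 := by
          rw [normsq_helper]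
          simp [Complex.mul_re, Complex.mul_im, Complex.sub_re, Complex.sub_im]
          ring
        have e2 : ‖D z‖^2 = (L^2 - (c.re * (g z).re + c.im * (g z).im))^2
            + (c.im * (g z).re - c.re * (g z).im)^2 := by
          rw [normsq_helper, hD]
          simp [Complex.sub_re, Complex.sub_im, Complex.mul_re, Complex.mul_im,
            Complex.conj_re, Complex.conj_im, ← Complex.ofReal_pow]
          ring
        have h1' : (g z).re^2 + (g z).im^2 ≤ L^2 := by rw [normsq_helper] at h1; exact h1
        have h2' : c.re^2 + c.im^2 ≤ L^2 := by rw [normsq_helper] at h2; exact h2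
        have hsq : ‖((L:ℝ):ℂ) * (g z - c)‖^2 ≤ ‖D z‖^2 := by
          rw [e1, e2]
          nlinarith [sq_nonneg (L^2 - ((g z).re^2 + (g z).im^2)), sq_nonneg (L^2 - (c.re^2+c.im^2)), mul_le_mul h1' h2' (by positivity) (by positivity : (0:ℝ) ≤ L^2)]
        nlinarith [norm_nonneg (((L:ℝ):ℂ) * (g z - c)), norm_nonneg (D z), hsq]
      rw [norm_div]
      rw [div_le_one_iff]
      rcases eq_or_ne (D z) 0 with h|h
      · exact absurd h (hDne z hz)
      · left
        exact ⟨norm_pos_iff.mpr h, by simpa using key⟩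
    have hχ0 : χ 0 = 0 := by simp [hχ, hcdef]
    -- Schwarz lemma
    have hder : ‖deriv χ 0‖ ≤ 1 := by
      have h' : ∀ ε : ℝ, 0 < ε → ‖deriv χ 0‖ ≤ 1 + ε := by
        intro ε hε
        have := Complex.norm_deriv_le_div_of_mapsTo_ball (c := 0) (R₁ := 1) (R₂ := 1 + ε)
          hχan.differentiableOn (fun z hz => by
            simp only [mem_ball, mem_closedBall] at hz ⊢
            rw [dist_eq_norm, hχ0, sub_zero]
            exact le_trans (hχb z (by simpa using hz)) (by linarith)) one_pos
        rw [div_one] at this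
        exact this
      linarith [le_of_forall_pos_le_add h']
    -- compute deriv χ 0
    have hgd : HasDerivAt g (deriv g 0) 0 := (hg 0 h01).differentiableAt.hasDerivAt
    have hN : HasDerivAt (fun z => ((L:ℝ):ℂ) * (g z - c)) (((L:ℝ):ℂ) * deriv g 0) 0 :=
      ((hgd.sub_const c).const_mul _)
    have hDd : HasDerivAt D (-((starRingEnd ℂ) c * deriv g 0)) 0 := by
      have : HasDerivAt (fun z => (starRingEnd ℂ) c * g z) ((starRingEnd ℂ) c * deriv g 0) 0 :=
        hgd.const_mul _
      exact this.const_sub _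
    have hcc : (starRingEnd ℂ) c * c = ((‖c‖^2 : ℝ) : ℂ) := by
      rw [mul_comm, Complex.mul_conj]
      norm_cast
      rw [Complex.normSq_eq_norm_sq]
    have hD0 : D 0 = ((L^2 - ‖c‖^2 : ℝ) : ℂ) := by
      show ((L^2 : ℝ) : ℂ) - (starRingEnd ℂ) c * g 0 = _
      rw [← hcdef, hcc]
      push_cast
      ring
    have hsub : g 0 - c = 0 := by rw [hcdef, sub_self]
    have hpos : 0 < L^2 - ‖c‖^2 := by nlinarith [norm_nonneg c]
    have hD0ne : D 0 ≠ 0 := hDne 0 h01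
    have hval : deriv χ 0 = ((L:ℝ):ℂ) * deriv g 0 / D 0 := by
      have hder2 := (hN.div hDd hD0ne).deriv
      rw [hχ]
      rw [show (fun z => ((L:ℝ):ℂ) * (g z - c) / D z) = (fun z => ((L:ℝ):ℂ) * (g z - c)) / D from rfl, hder2, hsub]
      field_simp
      ring
    have hnorm : ‖deriv χ 0‖ = L * ‖deriv g 0‖ / (L^2 - ‖c‖^2) := by
      rw [hval, hD0, norm_div, norm_mul, Complex.norm_real, Complex.norm_real,
        Real.norm_of_nonneg hL.le, Real.norm_of_nonneg hpos.le]
    rw [hnorm] at hder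
    rw [div_le_one hpos] at hder
    rw [le_div_iff₀ hL]
    linarith



/-- If G is analytic on the unit disk with ‖G'‖ ≤ lam there and 1 + z·G z never vanishes,
then ‖G 0‖ ≤ 1 + lam. -/
theorem KL4 {G : ℂ → ℂ} {lam : ℝ} (hlam0 : 0 < lam) (hlam1 : lam ≤ 1)
    (hG : AnalyticOnNhd ℂ G (ball 0 1))
    (hd : ∀ z ∈ ball (0:ℂ) 1, ‖deriv G z‖ ≤ lam)
    (hnv : ∀ z ∈ ball (0:ℂ) 1, 1 + z * G z ≠ 0) :
    ‖G 0‖ ≤ 1 + lam := by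
  by_contra hM
  push_neg at hM
  obtain ⟨M, hMdef⟩ : ∃ M, M = ‖G 0‖ := ⟨_, rfl⟩
  rw [← hMdef] at hM
  have hMpos : 0 < M := lt_trans (by linarith) hM
  obtain ⟨r, hrdef⟩ : ∃ r : ℝ, r = (1 + lam) / M := ⟨_, rfl⟩
  have hr0 : 0 < r := by rw [hrdef]; positivity
  have hr1 : r < 1 := by
    rw [hrdef, div_lt_one hMpos]; exact hM
  have hsub : closedBall (0:ℂ) r ⊆ ball (0:ℂ) 1 := by
    apply closedBall_subset_ball hr1
  -- Lipschitz bound for G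
  have hdiff : DifferentiableOn ℂ G (ball (0:ℂ) 1) := hG.differentiableOn
  have hLip : ∀ x ∈ ball (0:ℂ) 1, ∀ y ∈ ball (0:ℂ) 1, ‖G x - G y‖ ≤ lam * ‖x - y‖ := by
    intro x hx y hy
    exact (convex_ball (0:ℂ) 1).norm_image_sub_le_of_norm_deriv_le
      (fun z hz => (hG z hz).differentiableAt) hd hy hx
  -- lower bound on G on the closed ball
  have hlow : ∀ z ∈ closedBall (0:ℂ) r, 1/r < ‖G z‖ := by
    intro z hz
    have h1 : ‖G z - G 0‖ ≤ lam * ‖z‖ := by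
      simpa using hLip z (hsub hz) 0 (mem_ball_self one_pos)
    have h2 : ‖z‖ ≤ r := by simpa using hz
    have h3 : ‖G z‖ ≥ M - lam * r := by
      have := norm_sub_norm_le (G z - G 0) (G 0)  -- not quite
      have h4 : M - ‖G z‖ ≤ ‖G z - G 0‖ := by
        have := norm_sub_norm_le (G 0) (G z)
        rw [hMdef]
        calc ‖G 0‖ - ‖G z‖ ≤ ‖G 0 - G z‖ := norm_sub_norm_le _ _
          _ = ‖G z - G 0‖ := norm_sub_rev _ _
      nlinarith [mul_le_mul_of_nonneg_left h2 hlam0.le]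
    -- M - lam * r > 1/r
    have hrM : r * M = 1 + lam := by
      rw [hrdef]; field_simp
    have key : 1/r < M - lam * r := by
      rw [div_lt_iff₀ hr0]
      nlinarith [mul_pos hlam0 (mul_pos (sub_pos.mpr hr1) (by linarith : (0:ℝ) < 1 + r))]
    linarith
  have hGne : ∀ z ∈ closedBall (0:ℂ) r, G z ≠ 0 := by
    intro z hz h
    have := hlow z hz
    rw [h] at this
    simp at this
    linarith [one_div_pos.mpr hr0]
  -- the contraction map
  set T : ℂ → ℂ := fun z => -(G z)⁻¹ with hT
  have hmaps : Set.MapsTo T (closedBall (0:ℂ) r) (closedBall (0:ℂ) r) := by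
    intro z hz
    simp only [mem_closedBall, dist_zero_right, hT]
    rw [norm_neg, norm_inv]
    have h1 := hlow z hz
    have h2 : 0 < ‖G z‖ := lt_trans (by positivity) h1
    rw [inv_le_comm₀ h2 hr0]
    linarith [(one_div r).symm ▸ h1]
  have hK1 : lam * r^2 < 1 := by nlinarith
  have hKnn : (0:ℝ) ≤ lam * r^2 := by positivity
  have hlipT : LipschitzOnWith (⟨lam * r^2, hKnn⟩ : NNReal) T (closedBall (0:ℂ) r) := by
    apply LipschitzOnWith.of_dist_le_mul
    intro x hx y hy
    simp only [hT, dist_eq_norm]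
    have hgx := hGne x hx
    have hgy := hGne y hy
    have heq : -(G x)⁻¹ - -(G y)⁻¹ = (G x - G y) / (G x * G y) := by
      calc -(G x)⁻¹ - -(G y)⁻¹ = (G y)⁻¹ - (G x)⁻¹ := by ring
        _ = (G x - G y) / (G y * G x) := inv_sub_inv hgy hgx
        _ = (G x - G y) / (G x * G y) := by rw [mul_comm]
    rw [heq, norm_div, norm_mul]
    have h1 : ‖G x - G y‖ ≤ lam * ‖x - y‖ := hLip x (hsub hx) y (hsub hy)
    have h2 : 1/r < ‖G x‖ := hlow x hx
    have h3 : 1/r < ‖G y‖ := hlow y hy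
    have h4 : 0 < ‖G x‖ * ‖G y‖ :=
      mul_pos (lt_trans (one_div_pos.mpr hr0) h2) (lt_trans (one_div_pos.mpr hr0) h3)
    rw [div_le_iff₀ h4]
    have h5 : 1/r^2 ≤ ‖G x‖ * ‖G y‖ := by
      have e : 1/r^2 = (1/r) * (1/r) := by ring
      rw [e]
      apply mul_le_mul h2.le h3.le (one_div_nonneg.mpr hr0.le) (norm_nonneg _)
    have h6 : 0 ≤ ‖x - y‖ := norm_nonneg _
    have hrr : r^2 * (1/r^2) = 1 := by
      rw [mul_one_div, div_self (pow_ne_zero 2 hr0.ne')]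
    have hmain : ‖G x - G y‖ ≤ (lam * r^2) * ‖x - y‖ * (‖G x‖ * ‖G y‖) := by
      calc ‖G x - G y‖ ≤ lam * ‖x - y‖ := h1
        _ = lam * ‖x - y‖ * (r^2 * (1/r^2)) := by rw [hrr, mul_one]
        _ = (lam * r^2 * ‖x - y‖) * (1/r^2) := by ring
        _ ≤ (lam * r^2 * ‖x - y‖) * (‖G x‖ * ‖G y‖) := by
            exact mul_le_mul_of_nonneg_left h5
              (mul_nonneg (mul_nonneg hlam0.le (sq_nonneg r)) h6)
    calc ‖G x - G y‖ ≤ (lam * r^2) * ‖x - y‖ * (‖G x‖ * ‖G y‖) := hmain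
      _ = ↑(⟨lam * r^2, hKnn⟩ : NNReal) * ‖x - y‖ * (‖G x‖ * ‖G y‖) := rfl
  have hcomplete : IsComplete (closedBall (0:ℂ) r) := isClosed_closedBall.isComplete
  have hcontr : ContractingWith (⟨lam * r^2, hKnn⟩ : NNReal) (hmaps.restrict T _ _) := by
    constructor
    · exact_mod_cast hK1
    · exact hlipT.mapsToRestrict hmaps
  have h0mem : (0:ℂ) ∈ closedBall (0:ℂ) r := by simp [hr0.le]
  set z₀ := ContractingWith.efixedPoint' T hcomplete hmaps hcontr 0 h0mem (edist_ne_top _ _)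
    with hz₀def
  have hz₀mem : z₀ ∈ closedBall (0:ℂ) r :=
    ContractingWith.efixedPoint_mem' hcomplete hmaps hcontr h0mem (edist_ne_top _ _)
  have hfix : T z₀ = z₀ :=
    ContractingWith.efixedPoint_isFixedPt' hcomplete hmaps hcontr h0mem (edist_ne_top _ _)
  have h9 : G z₀ ≠ 0 := hGne _ hz₀mem
  apply hnv z₀ (hsub hz₀mem)
  have h10 : z₀ * G z₀ = -(G z₀)⁻¹ * G z₀ := congrArg (· * G z₀) hfix.symm
  rw [h10, neg_mul, inv_mul_cancel₀ h9]
  ring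

theorem KL0' {g : ℂ → ℂ} {p : FormalMultilinearSeries ℂ ℂ ℂ}
    (h : HasFPowerSeriesAt g p 0) (n : ℕ) :
    iteratedDeriv n g 0 = n.factorial * p.coeff n := by
  obtain ⟨r, hr⟩ := h
  have := hr.factorial_smul (1 : ℂ) n
  rw [iteratedDeriv_eq_iteratedFDeriv]
  rw [← this, nsmul_eq_mul]
  rfl

theorem KFL {fl : ℂ → ℂ} {lam : ℝ} (hlam0 : 0 < lam) (hlam1 : lam ≤ 1)
    (hfl : ∀ z, fl z = z / ((1 - z) * (1 - (lam:ℂ) * z))) (n : ℕ) :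
    iteratedDeriv n fl 0 = n.factorial * ∑ k ∈ range n, (lam:ℂ)^k := by
  set s : ℕ → ℂ := fun n => ∑ k ∈ range n, (lam:ℂ)^k with hs
  set p := FormalMultilinearSeries.ofScalars ℂ s with hp
  have hcoeff : ∀ m, p.coeff m = s m := by
    intro m
    simp only [hp, FormalMultilinearSeries.coeff, FormalMultilinearSeries.ofScalars,
      ContinuousMultilinearMap.smul_apply, ContinuousMultilinearMap.mkPiAlgebraFin_apply,
      smul_eq_mul]
    simp [Pi.one_def, List.ofFn_const]
  have hps : HasFPowerSeriesAt fl p 0 := by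
    rw [hasFPowerSeriesAt_iff]
    have hball : ball (0:ℂ) (1/2) ∈ nhds (0:ℂ) := ball_mem_nhds _ (by norm_num)
    filter_upwards [hball] with z hz
    simp only [mem_ball, dist_zero_right] at hz
    have hz1 : ‖z‖ < 1 := by linarith
    have hlz : ‖(lam:ℂ) * z‖ < 1 := by
      rw [norm_mul, Complex.norm_real, Real.norm_of_nonneg hlam0.le]
      nlinarith [norm_nonneg z]
    -- geometric series
    have hA : HasSum (fun n : ℕ => z^n) (1 - z)⁻¹ := hasSum_geometric_of_norm_lt_one hz1
    have hB : HasSum (fun n : ℕ => ((lam:ℂ)*z)^n) (1 - (lam:ℂ)*z)⁻¹ :=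
      hasSum_geometric_of_norm_lt_one hlz
    have hAn : Summable fun n : ℕ => ‖z^n‖ := by
      simpa [norm_pow] using summable_geometric_of_lt_one (norm_nonneg z) hz1
    have hBn : Summable fun n : ℕ => ‖((lam:ℂ)*z)^n‖ := by
      simpa [norm_pow] using summable_geometric_of_lt_one (norm_nonneg _) hlz
    -- Cauchy product
    have hprod : HasSum (fun n : ℕ => ∑ kl ∈ Finset.HasAntidiagonal.antidiagonal n, z^kl.1 * ((lam:ℂ)*z)^kl.2)
        ((1 - z)⁻¹ * (1 - (lam:ℂ)*z)⁻¹) := by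
      have hsummable := summable_norm_sum_mul_antidiagonal_of_summable_norm hAn hBn
      have h2 := tsum_mul_tsum_eq_tsum_sum_antidiagonal_of_summable_norm hAn hBn
      rw [hA.tsum_eq, hB.tsum_eq] at h2
      have := (Summable.of_norm hsummable).hasSum
      rwa [← h2] at this
    -- rewrite terms
    have hterm : ∀ n : ℕ, ∑ kl ∈ Finset.HasAntidiagonal.antidiagonal n, z^kl.1 * ((lam:ℂ)*z)^kl.2
        = s (n+1) * z^n := by
      intro n
      rw [Finset.Nat.sum_antidiagonal_eq_sum_range_succ_mk]
      have : ∀ i ∈ range (n+1), z^i * ((lam:ℂ)*z)^(n-i) = (lam:ℂ)^(n-i) * z^n := by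
        intro i hi
        simp only [mem_range] at hi
        rw [mul_pow, ← mul_assoc, mul_comm (z^i), mul_assoc, ← pow_add]
        congr 2
        omega
      rw [Finset.sum_congr rfl this, ← Finset.sum_mul]
      congr 1
      rw [hs]
      rw [← Finset.sum_range_reflect]
      apply Finset.sum_congr rfl
      intro i hi
      simp only [mem_range] at hi
      congr 1
      omega
    have hprod2 : HasSum (fun n : ℕ => s (n+1) * z^n) ((1 - z)⁻¹ * (1 - (lam:ℂ)*z)⁻¹) := by
      simpa only [hterm] using hprod
    have hprod3 : HasSum (fun n : ℕ => z * (s (n+1) * z^n))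
        (z * ((1 - z)⁻¹ * (1 - (lam:ℂ)*z)⁻¹)) := hprod2.mul_left z
    -- shift index
    have hshift : HasSum (fun n : ℕ => z^n • s n) (z * ((1 - z)⁻¹ * (1 - (lam:ℂ)*z)⁻¹)) := by
      have he : ∀ n : ℕ, z^(n+1) • s (n+1) = z * (s (n+1) * z^n) := by
        intro n; rw [smul_eq_mul]; ring
      have h4 : HasSum (fun n : ℕ => z^(n+1) • s (n+1))
          (z * ((1 - z)⁻¹ * (1 - (lam:ℂ)*z)⁻¹)) := by
        simpa only [he] using hprod3
      have := (hasSum_nat_add_iff (f := fun n : ℕ => z^n • s n) 1).mp h4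
      simpa [hs] using this
    have hfval : fl (0 + z) = z * ((1 - z)⁻¹ * (1 - (lam:ℂ)*z)⁻¹) := by
      rw [zero_add, hfl z, div_eq_mul_inv, mul_inv]
    rw [hfval]
    simpa only [hcoeff] using hshift
  rw [KL0' hps n, hcoeff]
theorem krushkal_n4_U_lambda (f fl : ℂ → ℂ) (lam : ℝ) (hlam0 : 0 < lam) (hlam1 : lam ≤ 1)
    (hf : AnalyticOnNhd ℂ f (ball 0 1)) (hf0 : f 0 = 0) (hf1 : deriv f 0 = 1)
    (hU : ∀ z ∈ ball (0:ℂ) 1, z ≠ 0 → ‖(z / f z) ^ 2 * deriv f z - 1‖ < lam)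
    (a : ℕ → ℂ) (ha : ∀ n, a n = iteratedDeriv n f 0 / n.factorial)
    (hfl : ∀ z, fl z = z / ((1 - z) * (1 - (lam:ℂ) * z)))
    (b : ℕ → ℂ) (hb : ∀ n, b n = iteratedDeriv n fl 0 / n.factorial) :
    ‖a 4 - (a 2) ^ 3‖ ≤ 2 * lam * (1 + lam) ∧ ‖b 4 - (b 2) ^ 3‖ = 2 * lam * (1 + lam) := by
  constructor
  · -- the inequality for f
    have hΩ0 : (0:ℂ) ∈ ball (0:ℂ) 1 := mem_ball_self one_pos
    -- f does not vanish away from 0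
    have hfne : ∀ z ∈ ball (0:ℂ) 1, z ≠ 0 → f z ≠ 0 := by
      intro z hz hz0 h
      have := hU z hz hz0
      rw [h, div_zero] at this
      norm_num at this
      linarith
    set u := dslope f 0 with hu_def
    have hu : AnalyticOnNhd ℂ u (ball 0 1) := KL2 hf
    have hu0 : u 0 = 1 := by rw [hu_def, dslope_same, hf1]
    have hfu : ∀ z, f z = z * u z := by
      intro z
      have h := sub_smul_dslope f 0 z
      rw [sub_zero, hf0, sub_zero, smul_eq_mul] at h
      exact h.symm
    have hune : ∀ z ∈ ball (0:ℂ) 1, u z ≠ 0 := by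
      intro z hz
      rcases eq_or_ne z 0 with h|h
      · rw [h, hu0]; exact one_ne_zero
      · intro hcon
        exact hfne z hz h (by rw [hfu z, hcon, mul_zero])
    set F : ℂ → ℂ := fun z => (u z)⁻¹ with hF_def
    have hF : AnalyticOnNhd ℂ F (ball 0 1) := fun z hz => ((hu z hz).inv (hune z hz))
    have hF0 : F 0 = 1 := by rw [hF_def]; simp [hu0]
    set G := dslope F 0 with hG_def
    have hG : AnalyticOnNhd ℂ G (ball 0 1) := KL2 hF
    have hFG : ∀ z, F z = 1 + z * G z := by
      intro z
      have h := sub_smul_dslope F 0 z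
      rw [sub_zero, hF0, smul_eq_mul] at h
      rw [← hG_def] at h
      linear_combination -h
    have hG0 : G 0 = deriv F 0 := by rw [hG_def, dslope_same]
    -- Key identity
    have KI : ∀ z ∈ ball (0:ℂ) 1, z ≠ 0 →
        (z / f z) ^ 2 * deriv f z - 1 = -(z^2 * deriv G z) := by
      intro z hz hz0
      have hu' : HasDerivAt u (deriv u z) z := (hu z hz).differentiableAt.hasDerivAt
      have hf' : HasDerivAt f (u z + z * deriv u z) z := by
        have h1 : HasDerivAt (fun w => w * u w) (1 * u z + z * deriv u z) z :=
          (hasDerivAt_id z).mul hu'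
        rw [one_mul] at h1
        exact h1.congr_of_eventuallyEq (Filter.Eventually.of_forall hfu)
      have hFd : HasDerivAt F (-(deriv u z) / (u z)^2) z := hu'.inv (hune z hz)
      have hGz : G =ᶠ[nhds z] fun w => w⁻¹ * (F w - 1) := by
        filter_upwards [compl_singleton_mem_nhds hz0] with w hw
        rw [hG_def, dslope_of_ne F hw, slope_def_field, hF0, sub_zero, div_eq_inv_mul]
      have hGd : HasDerivAt G (-((z^2)⁻¹) * (F z - 1) + z⁻¹ * (-(deriv u z) / (u z)^2)) z := by
        have h1 : HasDerivAt (fun w => w⁻¹ * (F w - 1))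
            (-((z^2)⁻¹) * (F z - 1) + z⁻¹ * (-(deriv u z) / (u z)^2)) z :=
          (hasDerivAt_inv hz0).mul (hFd.sub_const 1)
        exact h1.congr_of_eventuallyEq hGz
      have hderivG : deriv G z = -((z^2)⁻¹) * (F z - 1) + z⁻¹ * (-(deriv u z) / (u z)^2) :=
        hGd.deriv
      have hFz : F z = (u z)⁻¹ := rfl
      rw [hderivG, hf'.deriv, hfu z, hFz]
      have huz := hune z hz
      field_simp
      ring
    -- sup bound for deriv G
    have hφb : ∀ z ∈ ball (0:ℂ) 1, ‖deriv G z‖ ≤ lam := by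
      intro z hz
      have hzn : ‖z‖ < 1 := by simpa using hz
      have hdG : AnalyticOnNhd ℂ (deriv G) (ball 0 1) := hG.deriv
      have haux : ∀ r : ℝ, ‖z‖ < r → r < 1 → ‖deriv G z‖ ≤ lam / r^2 := by
        intro r h1 h2
        have hr0 : 0 < r := lt_of_le_of_lt (norm_nonneg z) h1
        have hcl : closedBall (0:ℂ) r ⊆ ball (0:ℂ) 1 := closedBall_subset_ball h2
        apply Complex.norm_le_of_forall_mem_frontier_norm_le (isBounded_ball (x := (0:ℂ)) (r := r))
        · constructor
          · exact (hdG.mono (ball_subset_ball h2.le)).differentiableOn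
          · rw [closure_ball (0:ℂ) hr0.ne']
            exact (hdG.mono hcl).continuousOn
        · intro w hw
          rw [frontier_ball (0:ℂ) hr0.ne'] at hw
          have hwn : ‖w‖ = r := by simpa using hw
          have hw0 : w ≠ 0 := by
            intro h; rw [h] at hwn; simp at hwn; linarith
          have hwb : w ∈ ball (0:ℂ) 1 := by
            simp only [mem_ball, dist_zero_right]; rw [hwn]; exact h2
          have hKIw := KI w hwb hw0
          have hE := hU w hwb hw0
          have he1 : ‖w^2 * deriv G w‖ = r^2 * ‖deriv G w‖ := by
            rw [norm_mul, norm_pow, hwn]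
          have he2 : w^2 * deriv G w = -((w / f w) ^ 2 * deriv f w - 1) := by
            linear_combination hKIw
          rw [he2, norm_neg] at he1
          rw [show lam / r^2 = lam / r^2 from rfl]
          have : r^2 * ‖deriv G w‖ ≤ lam := by rw [← he1]; exact hE.le
          rw [le_div_iff₀ (by positivity)]
          linarith [this]
        · exact subset_closure (by simpa [mem_ball, dist_zero_right] using h1)
      have htend : Filter.Tendsto (fun r : ℝ => lam / r^2) (nhdsWithin 1 (Set.Iio 1))
          (nhds (lam / 1^2)) := by
        apply Filter.Tendsto.mono_left _ nhdsWithin_le_nhds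
        exact (ContinuousAt.div continuousAt_const ((continuous_pow 2).continuousAt)
          (by norm_num)).tendsto
      have : ‖deriv G z‖ ≤ lam / 1^2 := by
        apply ge_of_tendsto htend
        filter_upwards [Ioo_mem_nhdsLT_of_mem (Set.mem_Ioc.mpr ⟨hzn, le_refl 1⟩)] with r hr
        exact haux r hr.1 hr.2
      simpa using this
    -- the coefficient c1 bound
    have hGnorm : ‖G 0‖ ≤ 1 + lam := by
      apply KL4 hlam0 hlam1 hG hφb
      intro z hz
      rw [← hFG z]
      exact inv_ne_zero (hune z hz)
    -- φ and Schwarz-Pick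
    set φ : ℂ → ℂ := fun z => -(deriv G z) with hφ_def
    have hφan : AnalyticOnNhd ℂ φ (ball 0 1) := fun z hz => ((hG.deriv) z hz).neg
    have hφbd : ∀ z ∈ ball (0:ℂ) 1, ‖φ z‖ ≤ lam := by
      intro z hz; rw [hφ_def]; rw [norm_neg]; exact hφb z hz
    have hSP : ‖deriv φ 0‖ ≤ (lam^2 - ‖φ 0‖^2) / lam := KL3 hlam0 hφan hφbd
    -- now coefficients
    have hfa : AnalyticAt ℂ f 0 := hf 0 hΩ0
    have hFa : AnalyticAt ℂ F 0 := hF 0 hΩ0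
    -- derivatives of u in terms of a
    have hu1 : deriv u 0 = a 2 := by
      have := KL1 hfa 1
      rw [iteratedDeriv_one] at this
      rw [hu_def, this, ha 2]
      norm_num [Nat.factorial]
    have hu2 : iteratedDeriv 2 u 0 = 2 * a 3 := by
      have := KL1 hfa 2
      rw [hu_def, this, ha 3]
      norm_num [Nat.factorial]
      ring
    have hu3 : iteratedDeriv 3 u 0 = 6 * a 4 := by
      have := KL1 hfa 3
      rw [hu_def, this, ha 4]
      norm_num [Nat.factorial]
      ring
    -- analyticity of derivatives of u
    have hud : AnalyticOnNhd ℂ (deriv u) (ball 0 1) := hu.deriv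
    have hudd : AnalyticOnNhd ℂ (deriv (deriv u)) (ball 0 1) := hud.deriv
    have hu_ev : ∀ᶠ w in nhds (0:ℂ), u w ≠ 0 :=
      (hu 0 hΩ0).continuousAt.eventually_ne (by rw [hu0]; exact one_ne_zero)
    have hΩev : ∀ᶠ w in nhds (0:ℂ), w ∈ ball (0:ℂ) 1 := isOpen_ball.mem_nhds hΩ0
    -- first derivative of F
    have hF1 : deriv F 0 = -(a 2) := by
      have h := (((hu 0 hΩ0).differentiableAt.hasDerivAt).inv (hune 0 hΩ0)).deriv
      rw [show u⁻¹ = F from rfl] at h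
      rw [h, hu0, hu1]
      simp
    -- eventual formula for deriv F
    have hFd_ev : deriv F =ᶠ[nhds (0:ℂ)] fun w => -(deriv u w) / (u w)^2 := by
      filter_upwards [hu_ev, hΩev] with w hw1 hw2
      have h := (((hu w hw2).differentiableAt.hasDerivAt).inv hw1).deriv
      rw [show u⁻¹ = F from rfl] at h
      rw [h]
    -- second derivative of F
    have hF2 : iteratedDeriv 2 F 0 = -(2 * a 3) + 2 * (a 2)^2 := by
      rw [iteratedDeriv_succ, iteratedDeriv_one]
      rw [hFd_ev.deriv_eq]
      have hdu : HasDerivAt (deriv u) (iteratedDeriv 2 u 0) 0 := by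
        have := (hud 0 hΩ0).differentiableAt.hasDerivAt
        rwa [show deriv (deriv u) 0 = iteratedDeriv 2 u 0 by
          rw [iteratedDeriv_succ, iteratedDeriv_one]] at this
      have huu : HasDerivAt u (deriv u 0) 0 := (hu 0 hΩ0).differentiableAt.hasDerivAt
      have hpow : HasDerivAt (fun w => (u w)^2) ((2:ℕ) * (u 0)^(2-1) * deriv u 0) 0 := huu.pow 2
      have hdiv := HasDerivAt.deriv (f := fun w => -(deriv u w) / (u w)^2) (hdu.neg.div hpow (by rw [hu0]; norm_num))
      rw [hdiv, Pi.neg_apply, hu0, hu1, hu2]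
      push_cast
      ring
    -- eventual formula for second derivative of F
    have hFdd_ev : deriv (deriv F) =ᶠ[nhds (0:ℂ)]
        fun w => (-(deriv (deriv u) w) * (u w)^2 + 2 * (u w) * (deriv u w)^2) / (u w)^4 := by
      filter_upwards [hu_ev, hΩev] with w hw1 hw2
      have hev_w : deriv F =ᶠ[nhds w] fun v => -(deriv u v) / (u v)^2 := by
        filter_upwards [(hu w hw2).continuousAt.eventually_ne hw1, isOpen_ball.mem_nhds hw2]
          with v hv1 hv2
        have h := (((hu v hv2).differentiableAt.hasDerivAt).inv hv1).deriv
        rw [show u⁻¹ = F from rfl] at h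
        rw [h]
      rw [hev_w.deriv_eq]
      have hdu : HasDerivAt (deriv u) (deriv (deriv u) w) w :=
        (hud w hw2).differentiableAt.hasDerivAt
      have huu : HasDerivAt u (deriv u w) w := (hu w hw2).differentiableAt.hasDerivAt
      have hpow : HasDerivAt (fun v => (u v)^2) ((2:ℕ) * (u w)^(2-1) * deriv u w) w := huu.pow 2
      rw [HasDerivAt.deriv (f := fun v => -(deriv u v) / (u v)^2) (hdu.neg.div hpow (pow_ne_zero 2 hw1)), Pi.neg_apply]
      have hwne : u w ≠ 0 := hw1
      field_simp
      ring
    -- third derivative of F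
    have hF3 : iteratedDeriv 3 F 0 = -(6 * a 4) + 6 * (a 2) * (2 * a 3) - 6 * (a 2)^3 := by
      rw [show (3:ℕ) = 2 + 1 from rfl, iteratedDeriv_succ, iteratedDeriv_succ, iteratedDeriv_one]
      rw [hFdd_ev.deriv_eq]
      have hddu : HasDerivAt (deriv (deriv u)) (iteratedDeriv 3 u 0) 0 := by
        have := (hudd 0 hΩ0).differentiableAt.hasDerivAt
        rwa [show deriv (deriv (deriv u)) 0 = iteratedDeriv 3 u 0 by
          rw [show (3:ℕ) = 2 + 1 from rfl, iteratedDeriv_succ, iteratedDeriv_succ,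
            iteratedDeriv_one]] at this
      have hdu' : HasDerivAt (deriv u) (iteratedDeriv 2 u 0) 0 := by
        have := (hud 0 hΩ0).differentiableAt.hasDerivAt
        rwa [show deriv (deriv u) 0 = iteratedDeriv 2 u 0 by
          rw [iteratedDeriv_succ, iteratedDeriv_one]] at this
      have huu : HasDerivAt u (deriv u 0) 0 := (hu 0 hΩ0).differentiableAt.hasDerivAt
      have hN : HasDerivAt
          (fun w => -(deriv (deriv u) w) * (u w)^2 + 2 * (u w) * (deriv u w)^2) _ 0 :=
        ((hddu.neg).mul (huu.pow 2)).add (((huu.const_mul (2:ℂ))).mul (hdu'.pow 2))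
      have hD : HasDerivAt (fun w => (u w)^4) ((4:ℕ) * (u 0)^(4-1) * deriv u 0) 0 := huu.pow 4
      rw [HasDerivAt.deriv (f := fun w => (-(deriv (deriv u) w) * (u w)^2 + 2 * (u w) * (deriv u w)^2) / (u w)^4) (hN.div hD (by rw [hu0]; norm_num)), Pi.pow_apply, Pi.neg_apply, hu0]
      rw [show deriv (deriv u) 0 = iteratedDeriv 2 u 0 by
        rw [iteratedDeriv_succ, iteratedDeriv_one]]
      rw [hu1, hu2, hu3]
      push_cast
      ring
    -- derivatives of G at 0
    have hG1 : deriv G 0 = iteratedDeriv 2 F 0 / 2 := by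
      have := KL1 hFa 1
      rw [iteratedDeriv_one] at this
      rw [hG_def, this]
      norm_num
    have hG2 : iteratedDeriv 2 G 0 = iteratedDeriv 3 F 0 / 3 := by
      have := KL1 hFa 2
      rw [hG_def, this]
      norm_num
    -- values of φ
    have hφ0 : φ 0 = (a 3) - (a 2)^2 := by
      rw [hφ_def]
      simp only
      rw [hG1, hF2]
      ring
    have hφ'0 : deriv φ 0 = 2 * (a 4) - 4 * (a 2) * (a 3) + 2 * (a 2)^3 := by
      have : deriv φ 0 = -(deriv (deriv G) 0) := by
        rw [hφ_def]
        exact deriv.neg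
      rw [this]
      rw [show deriv (deriv G) 0 = iteratedDeriv 2 G 0 by
        rw [iteratedDeriv_succ, iteratedDeriv_one]]
      rw [hG2, hF3]
      ring
    have hGa2 : G 0 = -(a 2) := by rw [hG0, hF1]
    -- final computation
    have hkey : a 4 - (a 2)^3 = (deriv φ 0) / 2 + 2 * (a 2) * (φ 0) := by
      rw [hφ0, hφ'0]; ring
    have htri : ‖a 4 - (a 2)^3‖ ≤ ‖deriv φ 0‖ / 2 + 2 * ‖a 2‖ * ‖φ 0‖ := by
      rw [hkey]
      calc ‖(deriv φ 0) / 2 + 2 * (a 2) * (φ 0)‖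
          ≤ ‖(deriv φ 0) / 2‖ + ‖2 * (a 2) * (φ 0)‖ := norm_add_le _ _
        _ = ‖deriv φ 0‖ / 2 + 2 * ‖a 2‖ * ‖φ 0‖ := by
            rw [norm_div, norm_mul, norm_mul]
            norm_num
    have hA : ‖a 2‖ ≤ 1 + lam := by
      have : ‖a 2‖ = ‖G 0‖ := by rw [hGa2, norm_neg]
      rw [this]; exact hGnorm
    have hT : ‖φ 0‖ ≤ lam := hφbd 0 hΩ0
    have hT0 : (0:ℝ) ≤ ‖φ 0‖ := norm_nonneg _
    have hA0 : (0:ℝ) ≤ ‖a 2‖ := norm_nonneg _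
    have hdlam : ‖deriv φ 0‖ * lam ≤ lam^2 - ‖φ 0‖^2 := by
      have := hSP
      rw [le_div_iff₀ hlam0] at this
      exact this
    have h2l : (0:ℝ) < 2 * lam := by linarith
    apply le_trans htri
    apply le_of_mul_le_mul_left _ h2l
    have hAT : ‖a 2‖ * ‖φ 0‖ ≤ (1 + lam) * ‖φ 0‖ := mul_le_mul_of_nonneg_right hA hT0
    nlinarith [mul_nonneg (sub_nonneg.mpr hT)
      (show (0:ℝ) ≤ 3*lam + 4*lam^2 - ‖φ 0‖ by nlinarith),
      mul_le_mul_of_nonneg_left hAT (by linarith : (0:ℝ) ≤ 4*lam), norm_nonneg (deriv φ 0)]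
  · -- equality for fl
    have h2 := KFL hlam0 hlam1 hfl 2
    have h4 := KFL hlam0 hlam1 hfl 4
    have hb2 : b 2 = 1 + (lam:ℂ) := by
      rw [hb 2, h2]
      rw [Finset.sum_range_succ, Finset.sum_range_succ, Finset.sum_range_zero]
      norm_num [Nat.factorial]
    have hb4 : b 4 = 1 + (lam:ℂ) + (lam:ℂ)^2 + (lam:ℂ)^3 := by
      rw [hb 4, h4]
      rw [Finset.sum_range_succ, Finset.sum_range_succ, Finset.sum_range_succ,
        Finset.sum_range_succ, Finset.sum_range_zero]
      norm_num [Nat.factorial]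
    have hval : b 4 - (b 2)^3 = ((-(2 * lam * (1 + lam)) : ℝ) : ℂ) := by
      rw [hb2, hb4]
      push_cast
      ring
    rw [hval, Complex.norm_real, Real.norm_eq_abs, abs_neg]
    exact abs_of_nonneg (by nlinarith)
end

section
/- Let f ∈ 𝒰(λ), 0 < λ ≤ 1, with f(z) = z + a₂z² + ... . Then the third Hankel determinant H₃(1) = a₃(a₂a₄ − a₃²) − a₄(a₄ − a₂a₃) + a₅(a₃ − a₂²) satisfies |H₃(1)| ≤ λ²/4, with equality for f(z) = z/(1 − (λ/2)z³). -/
open Complex Metric Filter Set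
open scoped Topology ENNReal

namespace HankelAux

lemma ofScalars_coeff (c : ℕ → ℂ) (n : ℕ) :
    (FormalMultilinearSeries.ofScalars ℂ c).coeff n = c n := by
  show (FormalMultilinearSeries.ofScalars ℂ c) n (fun _ => 1) = c n
  rw [FormalMultilinearSeries.ofScalars_apply_eq]
  simp

lemma iteratedDeriv_eq_coeff {f : ℂ → ℂ} {p : FormalMultilinearSeries ℂ ℂ ℂ}
    (h : HasFPowerSeriesAt f p 0) (n : ℕ) :
    iteratedDeriv n f 0 = (n.factorial : ℂ) * p.coeff n := by
  obtain ⟨r, hr⟩ := h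
  have h2 := hr.factorial_smul (1 : ℂ) n
  rw [iteratedDeriv_eq_iteratedFDeriv, ← h2, nsmul_eq_mul]
  norm_num

end HankelAux

namespace HankelAux

lemma hasFPowerSeriesAt_mul {F G : ℂ → ℂ} {pF pG : FormalMultilinearSeries ℂ ℂ ℂ}
    (hF : HasFPowerSeriesAt F pF 0) (hG : HasFPowerSeriesAt G pG 0) :
    HasFPowerSeriesAt (fun z => F z * G z)
      (FormalMultilinearSeries.ofScalars ℂ
        (fun n => ∑ k ∈ Finset.range (n+1), pF.coeff k * pG.coeff (n-k))) 0 := by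
  rw [hasFPowerSeriesAt_iff]
  obtain ⟨rF, hrF⟩ := hF
  obtain ⟨rG, hrG⟩ := hG
  have hFr : (0:ℝ≥0∞) < pF.radius := lt_of_lt_of_le hrF.r_pos hrF.r_le
  have hGr : (0:ℝ≥0∞) < pG.radius := lt_of_lt_of_le hrG.r_pos hrG.r_le
  have hFs := hasFPowerSeriesAt_iff.mp ⟨rF, hrF⟩
  have hGs := hasFPowerSeriesAt_iff.mp ⟨rG, hrG⟩
  filter_upwards [hFs, hGs, EMetric.ball_mem_nhds (0:ℂ) hFr, EMetric.ball_mem_nhds (0:ℂ) hGr]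
    with z hsF hsG hzF hzG
  have sF : Summable fun n => ‖pF.coeff n * z ^ n‖ := by
    have := pF.summable_norm_apply hzF
    simpa [FormalMultilinearSeries.apply_eq_pow_smul_coeff, smul_eq_mul, mul_comm] using this
  have sG : Summable fun n => ‖pG.coeff n * z ^ n‖ := by
    have := pG.summable_norm_apply hzG
    simpa [FormalMultilinearSeries.apply_eq_pow_smul_coeff, smul_eq_mul, mul_comm] using this
  have hFz : HasSum (fun n => pF.coeff n * z ^ n) (F (0 + z)) := by
    simpa [smul_eq_mul, mul_comm] using hsF
  have hGz : HasSum (fun n => pG.coeff n * z ^ n) (G (0 + z)) := by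
    simpa [smul_eq_mul, mul_comm] using hsG
  have key := hasSum_sum_range_mul_of_summable_norm sF sG
  rw [hFz.tsum_eq, hGz.tsum_eq] at key
  convert key using 2 with n
  · rfl
  rw [ofScalars_coeff, smul_eq_mul, Finset.mul_sum]
  apply Finset.sum_congr rfl
  intro k hk
  have hkn : k ≤ n := Nat.lt_succ_iff.mp (Finset.mem_range.mp hk)
  have hzz : z ^ n = z ^ k * z ^ (n - k) := by
    rw [← pow_add]; congr 1; omega
  rw [hzz]; ring

end HankelAux

namespace HankelAux

lemma deriv_series {φ : ℂ → ℂ} {q : FormalMultilinearSeries ℂ ℂ ℂ}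
    (h : HasFPowerSeriesAt φ q 0) :
    ∃ qd : FormalMultilinearSeries ℂ ℂ ℂ, HasFPowerSeriesAt (deriv φ) qd 0 ∧
      ∀ n, qd.coeff n = (n + 1 : ℂ) * q.coeff (n + 1) := by
  obtain ⟨r, hr⟩ := h
  have hd := hr.fderiv
  let L : (ℂ →L[ℂ] ℂ) →L[ℂ] ℂ := ContinuousLinearMap.apply ℂ ℂ (1 : ℂ)
  have hc := L.comp_hasFPowerSeriesOnBall hd
  have hderiv : deriv φ = L ∘ (fderiv ℂ φ) := by
    funext z
    show deriv φ z = ContinuousLinearMap.apply ℂ ℂ (1 : ℂ) (fderiv ℂ φ z)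
    rw [ContinuousLinearMap.apply_apply, fderiv_apply_one_eq_deriv]
  refine ⟨L.compFormalMultilinearSeries q.derivSeries, ⟨r, by rwa [hderiv]⟩, fun n => ?_⟩
  show (L.compFormalMultilinearSeries q.derivSeries) n (fun _ => 1) = _
  rw [ContinuousLinearMap.compFormalMultilinearSeries_apply]
  show L (q.derivSeries n (fun _ => 1)) = _
  rw [ContinuousLinearMap.apply_apply]
  have := q.derivSeries_apply_diag n (1 : ℂ)
  rw [this]
  have h2 : q.coeff (n+1) = q (n+1) (fun _ => 1) := rfl
  rw [h2, nsmul_eq_mul]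
  push_cast
  ring

end HankelAux

namespace HankelAux

lemma analyticOnNhd_dslope {W : ℂ → ℂ} (hW : AnalyticOnNhd ℂ W (ball 0 1)) :
    AnalyticOnNhd ℂ (dslope W 0) (ball 0 1) := by
  intro z hz
  rcases eq_or_ne z 0 with rfl | hz0
  · obtain ⟨p, hp⟩ := hW 0 (by simp)
    exact (hp.has_fpower_series_dslope_fslope).analyticAt
  · have h1 : AnalyticAt ℂ (fun w : ℂ => (W w - W 0) / w) z :=
      ((hW z hz).sub analyticAt_const).div analyticAt_id hz0
    apply h1.congr
    have : {w : ℂ | w ≠ 0} ∈ 𝓝 z := isOpen_ne.mem_nhds hz0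
    filter_upwards [this] with w hw
    rw [dslope_of_ne _ hw, slope_def_field]
    simp

lemma dslope_norm_le {W : ℂ → ℂ} {C : ℝ} (hW : DifferentiableOn ℂ W (ball 0 1))
    (hW0 : W 0 = 0) (hb : ∀ z ∈ ball (0:ℂ) 1, ‖W z‖ ≤ C) :
    ∀ z ∈ ball (0:ℂ) 1, ‖dslope W 0 z‖ ≤ C := by
  intro z hz
  rw [mem_ball_zero_iff] at hz
  have hC : 0 ≤ C := le_trans (norm_nonneg _) (hb 0 (by simp))
  have key : ∀ r ∈ Ioo ‖z‖ 1, ‖dslope W 0 z‖ ≤ (C + (1 - r)) / r := by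
    intro r hr
    have hr0 : 0 < r := lt_of_le_of_lt (norm_nonneg z) hr.1
    have hmaps : MapsTo W (ball 0 r) (ball (W 0) (C + (1 - r))) := by
      intro w hw
      rw [mem_ball_zero_iff] at hw
      rw [hW0, mem_ball_zero_iff]
      have : ‖W w‖ ≤ C := hb w (by rw [mem_ball_zero_iff]; exact hw.trans hr.2)
      linarith [hr.2]
    exact Complex.norm_dslope_le_div_of_mapsTo_ball
      (hW.mono (ball_subset_ball hr.2.le)) (hmaps.mono_right ball_subset_closedBall) (mem_ball_zero_iff.mpr hr.1)
  have htend : Tendsto (fun r : ℝ => (C + (1 - r)) / r) (𝓝[<] (1:ℝ)) (𝓝 C) := by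
    have : Tendsto (fun r : ℝ => (C + (1 - r)) / r) (𝓝 (1:ℝ)) (𝓝 ((C + (1 - 1))/1)) := by
      apply Tendsto.div
      · exact (tendsto_const_nhds.add ((tendsto_const_nhds).sub tendsto_id))
      · exact tendsto_id
      · norm_num
    simpa using this.mono_left nhdsWithin_le_nhds
  refine ge_of_tendsto htend ?_
  filter_upwards [Ioo_mem_nhdsLT_of_mem (by constructor <;> [exact hz; rfl] :
    (1:ℝ) ∈ Ioc ‖z‖ 1)] with r hr using key r hr

lemma mobius_le_one {u a : ℂ} (hu : ‖u‖ < 1) (ha : ‖a‖ ≤ 1) :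
    ‖(a - u) / (1 - (starRingEnd ℂ) u * a)‖ ≤ 1 := by
  have hden : ‖(starRingEnd ℂ) u * a‖ < 1 := by
    rw [norm_mul]
    calc ‖(starRingEnd ℂ) u‖ * ‖a‖ ≤ ‖u‖ * 1 := by
          apply mul_le_mul _ ha (norm_nonneg _) (norm_nonneg _)
          rw [RCLike.norm_conj]
      _ < 1 := by rwa [mul_one]
  have hne : (1 : ℂ) - (starRingEnd ℂ) u * a ≠ 0 := by
    intro h
    have : (1:ℂ) = (starRingEnd ℂ) u * a := by linear_combination h
    rw [← this] at hden
    simp at hden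
  rw [norm_div, div_le_one (norm_pos_iff.mpr hne)]
  -- key identity on squares
  have hsq : ‖1 - (starRingEnd ℂ) u * a‖^2 - ‖a - u‖^2 = (1 - ‖u‖^2) * (1 - ‖a‖^2) := by
    have e1 : ((1 - (starRingEnd ℂ) u * a) * (starRingEnd ℂ) (1 - (starRingEnd ℂ) u * a) : ℂ)
        - (a - u) * (starRingEnd ℂ) (a - u)
        = (1 - u * (starRingEnd ℂ) u) * (1 - a * (starRingEnd ℂ) a) := by
      simp only [map_sub, map_mul, map_one, Complex.conj_conj]
      ring
    rw [Complex.mul_conj, Complex.mul_conj, Complex.mul_conj, Complex.mul_conj] at e1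
    have e2 : (Complex.normSq (1 - (starRingEnd ℂ) u * a) : ℝ) - Complex.normSq (a - u)
        = (1 - Complex.normSq u) * (1 - Complex.normSq a) := by
      exact_mod_cast e1
    simpa [Complex.normSq_eq_norm_sq] using e2
  have h1 : 0 ≤ (1 - ‖u‖^2) * (1 - ‖a‖^2) :=
    mul_nonneg (by nlinarith [norm_nonneg u]) (by nlinarith [norm_nonneg a])
  have h2 : ‖a - u‖^2 ≤ ‖1 - (starRingEnd ℂ) u * a‖^2 := by linarith
  by_contra hlt
  push_neg at hlt
  exact absurd h2 (not_le.mpr (pow_lt_pow_left₀ hlt (norm_nonneg _) two_ne_zero))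

end HankelAux

namespace HankelAux

lemma const_coeff_succ {v : ℂ → ℂ} {q : FormalMultilinearSeries ℂ ℂ ℂ} {c : ℂ}
    (hq : HasFPowerSeriesAt v q 0) (hconst : v =ᶠ[𝓝 (0:ℂ)] fun _ => c) (n : ℕ) :
    q.coeff (n + 1) = 0 := by
  have h1 : HasFPowerSeriesAt (fun _ => c) q 0 := hq.congr hconst
  have h2 : HasFPowerSeriesAt (fun _ : ℂ => c) (constFormalMultilinearSeries ℂ ℂ c) 0 :=
    hasFPowerSeriesAt_const
  have := h1.eq_formalMultilinearSeries h2
  rw [this]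
  show (constFormalMultilinearSeries ℂ ℂ c) (n+1) (fun _ => 1) = 0
  rw [constFormalMultilinearSeries_apply_of_nonzero (Nat.succ_ne_zero n)]
  rfl

lemma schwarz_pick_zero {v : ℂ → ℂ} (hv : AnalyticOnNhd ℂ v (ball 0 1))
    (hb : ∀ z ∈ ball (0:ℂ) 1, ‖v z‖ ≤ 1) :
    ‖deriv v 0‖ ≤ 1 - ‖v 0‖^2 := by
  have h0 : (0:ℂ) ∈ ball (0:ℂ) 1 := by simp
  have hu1 : ‖v 0‖ ≤ 1 := hb 0 h0
  rcases eq_or_lt_of_le hu1 with heq | hlt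
  · -- constant case
    have hmax : IsMaxOn (norm ∘ v) (ball (0:ℂ) 1) 0 := by
      intro z hz
      simp only [Function.comp_apply]
      exact le_trans (hb z hz) heq.ge
    have hconst := Complex.eqOn_of_isPreconnected_of_isMaxOn_norm
      (convex_ball (0:ℂ) 1).isPreconnected isOpen_ball hv.differentiableOn h0 hmax
    have hev : v =ᶠ[𝓝 (0:ℂ)] fun _ => v 0 := by
      filter_upwards [isOpen_ball.mem_nhds h0] with z hz using hconst hz
    rw [hev.deriv_eq, deriv_const, norm_zero, heq]
    norm_num
  · -- Möbius case
    set u := v 0 with hu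
    set T := fun z => (v z - u) / (1 - (starRingEnd ℂ) u * v z) with hT
    have hden : ∀ z ∈ ball (0:ℂ) 1, (1 : ℂ) - (starRingEnd ℂ) u * v z ≠ 0 := by
      intro z hz h
      have h1 : ‖(starRingEnd ℂ) u * v z‖ < 1 := by
        rw [norm_mul, RCLike.norm_conj]
        calc ‖u‖ * ‖v z‖ ≤ ‖u‖ * 1 := by
              exact mul_le_mul_of_nonneg_left (hb z hz) (norm_nonneg _)
          _ < 1 := by rw [mul_one]; exact hlt
      have : (1:ℂ) = (starRingEnd ℂ) u * v z := by linear_combination h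
      rw [← this] at h1; simp at h1
  -- T is analytic, bounded, T 0 = 0
    have hTanal : AnalyticOnNhd ℂ T (ball 0 1) := by
      intro z hz
      exact ((hv z hz).sub analyticAt_const).div
        (analyticAt_const.sub (analyticAt_const.mul (hv z hz))) (hden z hz)
    have hTb : ∀ z ∈ ball (0:ℂ) 1, ‖T z‖ ≤ 1 := fun z hz => mobius_le_one hlt (hb z hz)
    have hT0 : T 0 = 0 := by simp [hT, hu]
    have hS := dslope_norm_le hTanal.differentiableOn hT0 hTb 0 h0
    rw [dslope_same] at hS
    -- deriv T 0 = deriv v 0 / (1 - ‖u‖^2)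
    have hdT : deriv T 0 = deriv v 0 / ((1:ℂ) - (starRingEnd ℂ) u * u) := by
      have hdv : DifferentiableAt ℂ v 0 := (hv 0 h0).differentiableAt
      have hd1 : deriv T 0 = (deriv v 0 * (1 - (starRingEnd ℂ) u * u) -
          (u - u) * (0 - (starRingEnd ℂ) u * deriv v 0)) / (1 - (starRingEnd ℂ) u * u)^2 := by
        rw [hT]
        rw [deriv_fun_div (d := fun z => 1 - (starRingEnd ℂ) u * v z) (hdv.sub_const u) ((differentiableAt_const _).sub
          ((differentiableAt_const _).mul hdv)) (by simpa using hden 0 h0)]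
        rw [deriv_sub_const, deriv_const_sub]
        rw [deriv_const_mul _ hdv]
        simp [hu]
      rw [hd1]
      have hne : ((1:ℂ) - (starRingEnd ℂ) u * u) ≠ 0 := by simpa using hden 0 h0
      field_simp
      ring
    have hm : ((1:ℂ) - (starRingEnd ℂ) u * u) = ((1 - ‖u‖^2 : ℝ) : ℂ) := by
      have : ((starRingEnd ℂ) u) * u = ((‖u‖^2 : ℝ) : ℂ) := by
        rw [mul_comm, Complex.mul_conj]
        norm_cast
        rw [Complex.normSq_eq_norm_sq]
      rw [this]
      push_cast
      ring
    rw [hdT, hm] at hS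
    rw [norm_div] at hS
    have hMpos : (0:ℝ) < 1 - ‖u‖^2 := by nlinarith [norm_nonneg u]
    have hnm : ‖((1 - ‖u‖^2 : ℝ) : ℂ)‖ = 1 - ‖u‖^2 := by
      rw [Complex.norm_real, Real.norm_eq_abs, abs_of_pos hMpos]
    rw [hnm, div_le_one hMpos] at hS
    linarith

end HankelAux

namespace HankelAux

set_option maxHeartbeats 1000000 in
lemma schur_two {v : ℂ → ℂ} {q : FormalMultilinearSeries ℂ ℂ ℂ}
    (hv : AnalyticOnNhd ℂ v (ball 0 1)) (hq : HasFPowerSeriesAt v q 0)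
    (hb : ∀ z ∈ ball (0:ℂ) 1, ‖v z‖ ≤ 1) :
    ‖q.coeff 0 * q.coeff 2 / 3 - (q.coeff 1)^2 / 4‖ ≤ 1/4 := by
  have h0 : (0:ℂ) ∈ ball (0:ℂ) 1 := by simp
  have hc0 : q.coeff 0 = v 0 := hq.coeff_zero 1
  have hc1 : q.coeff 1 = deriv v 0 := hq.deriv.symm
  have hu1 : ‖v 0‖ ≤ 1 := hb 0 h0
  rcases eq_or_lt_of_le hu1 with heq | hlt
  · have hmax : IsMaxOn (norm ∘ v) (ball (0:ℂ) 1) 0 := by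
      intro z hz
      simp only [Function.comp_apply]
      exact le_trans (hb z hz) heq.ge
    have hconst := Complex.eqOn_of_isPreconnected_of_isMaxOn_norm
      (convex_ball (0:ℂ) 1).isPreconnected isOpen_ball hv.differentiableOn h0 hmax
    have hev : v =ᶠ[𝓝 (0:ℂ)] fun _ => v 0 := by
      filter_upwards [isOpen_ball.mem_nhds h0] with z hz using hconst hz
    have e1 : q.coeff 1 = 0 := const_coeff_succ hq hev 0
    have e2 : q.coeff 2 = 0 := const_coeff_succ hq hev 1
    rw [e1, e2]
    norm_num
  · obtain ⟨u, hu⟩ : ∃ u, v 0 = u := ⟨v 0, rfl⟩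
    rw [hu] at hc0 hlt hu1
    set cu := (starRingEnd ℂ) u with hcu
    obtain ⟨d1, hd1⟩ : ∃ d1, q.coeff 1 = d1 := ⟨_, rfl⟩
    obtain ⟨d2, hd2⟩ : ∃ d2, q.coeff 2 = d2 := ⟨_, rfl⟩
    rw [hd1] at hc1
    set M : ℝ := 1 - ‖u‖^2 with hM
    have hMpos : (0:ℝ) < M := by nlinarith [norm_nonneg u]
    set m : ℂ := 1 - cu * u with hm
    have hmreal : m = ((M : ℝ) : ℂ) := by
      have h1 : cu * u = ((‖u‖^2 : ℝ) : ℂ) := by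
        rw [hcu, mul_comm, Complex.mul_conj]
        norm_cast
        rw [Complex.normSq_eq_norm_sq]
      rw [hm, h1, hM]
      push_cast
      ring
    have hmne : m ≠ 0 := by
      rw [hmreal]
      simp only [ne_eq, Complex.ofReal_eq_zero]
      exact hMpos.ne'
    have hden : ∀ z ∈ ball (0:ℂ) 1, (1 : ℂ) - cu * v z ≠ 0 := by
      intro z hz h
      have h1 : ‖cu * v z‖ < 1 := by
        rw [norm_mul, hcu, RCLike.norm_conj]
        calc ‖u‖ * ‖v z‖ ≤ ‖u‖ * 1 := mul_le_mul_of_nonneg_left (hb z hz) (norm_nonneg _)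
          _ < 1 := by rw [mul_one]; exact hlt
      have : (1:ℂ) = cu * v z := by linear_combination h
      rw [← this] at h1; simp at h1
    set T := fun z => (v z - u) / (1 - cu * v z) with hT
    have hTanal : AnalyticOnNhd ℂ T (ball 0 1) := by
      intro z hz
      exact ((hv z hz).sub analyticAt_const).div
        (analyticAt_const.sub (analyticAt_const.mul (hv z hz))) (hden z hz)
    have hTb : ∀ z ∈ ball (0:ℂ) 1, ‖T z‖ ≤ 1 := fun z hz => mobius_le_one hlt (hb z hz)
    have hT0 : T 0 = 0 := by simp [hT, hu]
    have hT' : ∀ z ∈ ball (0:ℂ) 1, deriv T z = m * (deriv v z / ((1 - cu * v z)^2)) := by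
      intro z hz
      have hdv : DifferentiableAt ℂ v z := (hv z hz).differentiableAt
      rw [hT]
      rw [deriv_fun_div (d := fun z => 1 - cu * v z) (hdv.sub_const u) ((differentiableAt_const _).sub
        ((differentiableAt_const _).mul hdv)) (hden z hz)]
      rw [deriv_sub_const, deriv_const_sub, deriv_const_mul _ hdv]
      rw [hm, mul_div_assoc']
      congr 1
      ring
    obtain ⟨qT, hqT⟩ := hTanal 0 h0
    have hSseries : HasFPowerSeriesAt (dslope T 0) qT.fslope 0 :=
      hqT.has_fpower_series_dslope_fslope
    have hSanal : AnalyticOnNhd ℂ (dslope T 0) (ball 0 1) := analyticOnNhd_dslope hTanal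
    have hSb : ∀ z ∈ ball (0:ℂ) 1, ‖dslope T 0 z‖ ≤ 1 :=
      dslope_norm_le hTanal.differentiableOn hT0 hTb
    have hSP := schwarz_pick_zero hSanal hSb
    have hS0 : dslope T 0 0 = qT.coeff 1 := by
      rw [dslope_same]
      exact hqT.deriv
    have hdS0 : deriv (dslope T 0) 0 = qT.coeff 2 := by
      have h3 := hSseries.deriv
      rw [h3]
      exact FormalMultilinearSeries.coeff_fslope
    have hqT1 : qT.coeff 1 = d1 / m := by
      have h1 : deriv T 0 = m * (d1 / m^2) := by
        have h2 := hT' 0 h0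
        rw [h2, hu, ← hc1, ← hm]
      have h4 : qT.coeff 1 = deriv T 0 := hqT.deriv.symm
      rw [h4, h1]
      field_simp
    have hdvanal : AnalyticOnNhd ℂ (deriv v) (ball 0 1) := hv.deriv
    have hitd2 : iteratedDeriv 2 v 0 = 2 * d2 := by
      rw [iteratedDeriv_eq_coeff hq 2, hd2]
      norm_num
    have hv'0 : HasDerivAt (deriv v) (2 * d2) 0 := by
      have hdd : DifferentiableAt ℂ (deriv v) 0 := (hdvanal 0 h0).differentiableAt
      have h5 : deriv (deriv v) 0 = 2 * d2 := by
        rw [← hitd2, iteratedDeriv_succ, iteratedDeriv_one]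
      rw [← h5]
      exact hdd.hasDerivAt
    have hv0d : HasDerivAt v d1 0 := by
      have h6 : deriv v 0 = d1 := hc1.symm
      rw [← h6]
      exact (hv 0 h0).differentiableAt.hasDerivAt
    have hB : HasDerivAt (fun z => (1:ℂ) - cu * v z) (-(cu * d1)) 0 :=
      (hv0d.const_mul cu).const_sub 1
    have hB2 : HasDerivAt (fun z => ((1:ℂ) - cu * v z)^2)
        ((2:ℕ) * ((1:ℂ) - cu * v 0)^1 * -(cu * d1)) 0 := hB.pow 2
    have hB2' : HasDerivAt (fun z => ((1:ℂ) - cu * v z)^2) (2 * m * -(cu * d1)) 0 := by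
      convert hB2 using 1
      rw [hu, ← hm]
      push_cast
      ring
    have hQ : HasDerivAt (fun z => deriv v z / ((1 - cu * v z)^2))
        ((2 * d2 * m^2 - d1 * (2 * m * -(cu * d1))) / (m^2)^2) 0 := by
      have h7 := hv'0.div hB2' (by rw [hu, ← hm]; exact pow_ne_zero 2 hmne)
      convert h7 using 1
      · rfl
      · rfl
      · rfl
      rw [hu, ← hm, hc1]
    have hMder : HasDerivAt (fun z => m * (deriv v z / ((1 - cu * v z)^2)))
        (m * ((2 * d2 * m^2 - d1 * (2 * m * -(cu * d1))) / (m^2)^2)) 0 := hQ.const_mul m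
    have hdTev : deriv T =ᶠ[𝓝 (0:ℂ)] fun z => m * (deriv v z / ((1 - cu * v z)^2)) := by
      filter_upwards [isOpen_ball.mem_nhds h0] with z hz using hT' z hz
    have hitdT : iteratedDeriv 2 T 0
        = m * ((2 * d2 * m^2 - d1 * (2 * m * -(cu * d1))) / (m^2)^2) := by
      rw [iteratedDeriv_succ, iteratedDeriv_one, hdTev.deriv_eq]
      exact hMder.deriv
    have hqT2 : qT.coeff 2 = (d2 * m + cu * d1^2) / m^2 := by
      have h2 : iteratedDeriv 2 T 0 = 2 * qT.coeff 2 := by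
        rw [iteratedDeriv_eq_coeff hqT 2]
        norm_num
      have e : 2 * qT.coeff 2 = m * ((2 * d2 * m^2 - d1 * (2 * m * -(cu * d1))) / (m^2)^2) := by
        rw [← h2, hitdT]
      have hm4 : ((m^2)^2 : ℂ) ≠ 0 := pow_ne_zero _ (pow_ne_zero _ hmne)
      have e2 := congrArg (fun x => x * (m^2)^2) e
      simp only [mul_assoc] at e2
      rw [div_mul_cancel₀ _ hm4] at e2
      rw [eq_div_iff (pow_ne_zero 2 hmne)]
      have h8 : (2 * m^2 : ℂ) * (qT.coeff 2 * m^2) = (2 * m^2) * (d2 * m + cu * d1^2) := by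
        linear_combination e2
      exact mul_left_cancel₀ (mul_ne_zero two_ne_zero (pow_ne_zero 2 hmne)) h8
    rw [hS0, hdS0, hqT1, hqT2] at hSP
    set t : ℝ := ‖d1‖ with ht
    have hnormm : ‖m‖ = M := by
      rw [hmreal, Complex.norm_real, Real.norm_eq_abs, abs_of_pos hMpos]
    rw [norm_div, norm_div, norm_pow, hnormm] at hSP
    have hD : ‖d2 * m + cu * d1^2‖ ≤ M^2 - t^2 := by
      rw [div_pow] at hSP
      have h2 := mul_le_mul_of_nonneg_right hSP (le_of_lt (pow_pos hMpos 2))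
      rw [div_mul_cancel₀ _ (ne_of_gt (pow_pos hMpos 2))] at h2
      calc ‖d2 * m + cu * d1^2‖ ≤ (1 - t^2/M^2) * M^2 := h2
        _ = M^2 - t^2 := by field_simp
    have hDnn : 0 ≤ ‖d2 * m + cu * d1^2‖ := norm_nonneg _
    have htM : t ≤ M := by
      nlinarith [norm_nonneg d1, hMpos]
    have hid : q.coeff 0 * q.coeff 2 / 3 - (q.coeff 1)^2 / 4
        = u * (d2 * m + cu * d1^2) / (3 * m) - (cu * u) * d1^2 / (3 * m) - d1^2 / 4 := by
      rw [hd1, hd2, hc0]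
      field_simp
      ring
    rw [hid]
    have hnorm1 : ‖u * (d2 * m + cu * d1^2) / (3 * m)‖
        = ‖u‖ * ‖d2 * m + cu * d1^2‖ / (3 * M) := by
      rw [norm_div, norm_mul, norm_mul, hnormm, Complex.norm_ofNat]
    have hnorm2 : ‖(cu * u) * d1^2 / (3 * m)‖ = ‖u‖^2 * t^2 / (3 * M) := by
      rw [norm_div, norm_mul, norm_mul, norm_mul, hnormm, Complex.norm_ofNat, hcu,
        RCLike.norm_conj, norm_pow, ← ht]
      ring_nf
    have hnorm3 : ‖d1^2 / 4‖ = t^2 / 4 := by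
      rw [norm_div, norm_pow, ← ht, Complex.norm_ofNat]
    calc ‖u * (d2 * m + cu * d1^2) / (3 * m) - (cu * u) * d1^2 / (3 * m) - d1^2 / 4‖
        ≤ ‖u * (d2 * m + cu * d1^2) / (3 * m) - (cu * u) * d1^2 / (3 * m)‖ + ‖d1^2 / 4‖ :=
          norm_sub_le _ _
      _ ≤ ‖u * (d2 * m + cu * d1^2) / (3 * m)‖ + ‖(cu * u) * d1^2 / (3 * m)‖ + ‖d1^2 / 4‖ := by
          have h9 := norm_sub_le (u * (d2 * m + cu * d1^2) / (3 * m)) ((cu * u) * d1^2 / (3 * m))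
          linarith
      _ = ‖u‖ * ‖d2 * m + cu * d1^2‖ / (3 * M) + ‖u‖^2 * t^2 / (3 * M) + t^2 / 4 := by
          rw [hnorm1, hnorm2, hnorm3]
      _ ≤ 1/4 := by
          set x : ℝ := ‖u‖ with hx
          set D : ℝ := ‖d2 * m + cu * d1^2‖ with hDD
          have hx0 : 0 ≤ x := norm_nonneg u
          have hx1 : x < 1 := hlt
          have ht0 : 0 ≤ t := norm_nonneg d1
          have hstep : x * D / (3 * M) + x^2 * t^2 / (3 * M) + t^2/4
              = (4 * x * D + 4 * x^2 * t^2 + 3 * M * t^2) / (12 * M) := by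
            field_simp
            ring
          rw [hstep]
          rw [div_le_iff₀ (by positivity)]
          have hM2 : t^2 ≤ M^2 := by nlinarith [htM, ht0]
          have hfac : (0:ℝ) ≤ (1-x)*(3-x) := by nlinarith [hx1]
          have h1 : 4*x*D ≤ 4*x*(M^2 - t^2) :=
            mul_le_mul_of_nonneg_left hD (by positivity)
          have h2 : t^2*((1-x)*(3-x)) ≤ M^2*((1-x)*(3-x)) :=
            mul_le_mul_of_nonneg_right hM2 hfac
          have hfin : (0:ℝ) ≤ (1-x^2) * (2*x^2 + x^4) :=
            mul_nonneg (by nlinarith [hx1, hx0]) (by positivity)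
          nlinarith [h1, h2, hfin, hM]

end HankelAux

namespace HankelAux

lemma g_part {g : ℂ → ℂ} {lam : ℝ} (hlam0 : 0 < lam) (hlam1 : lam ≤ 1)
    (hg : ∀ z, g z = z / (1 - ((lam:ℂ) / 2) * z ^ 3))
    (b : ℕ → ℂ) (hb : ∀ n, b n = iteratedDeriv n g 0 / n.factorial) :
    ‖b 3 * (b 2 * b 4 - (b 3) ^ 2) - b 4 * (b 4 - b 2 * b 3) + b 5 * (b 3 - (b 2) ^ 2)‖
      = lam ^ 2 / 4 := by
  set c : ℂ := (lam : ℂ) / 2 with hc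
  set e : ℕ → ℂ := fun n => if n % 3 = 1 then c ^ (n / 3) else 0 with he
  have hgs : HasFPowerSeriesAt g (FormalMultilinearSeries.ofScalars ℂ e) 0 := by
    rw [hasFPowerSeriesAt_iff]
    filter_upwards [Metric.ball_mem_nhds (0:ℂ) one_half_pos] with z hz
    rw [mem_ball_zero_iff] at hz
    have hcn : ‖c‖ ≤ 1/2 := by
      rw [hc, norm_div, Complex.norm_real, Real.norm_eq_abs, abs_of_pos hlam0]
      simp only [Complex.norm_ofNat]
      linarith
    have hlt : ‖c * z ^ 3‖ < 1 := by
      rw [norm_mul, norm_pow]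
      have hz3 : ‖z‖^3 < (1/2:ℝ)^3 := by
        apply pow_lt_pow_left₀ hz (norm_nonneg z)
        norm_num
      nlinarith [mul_le_mul hcn hz3.le (by positivity) (by norm_num : (0:ℝ) ≤ 1/2)]
    have hgeo := (hasSum_geometric_of_norm_lt_one hlt).mul_left z
    have hval : z * (1 - c * z ^ 3)⁻¹ = g (0 + z) := by
      rw [zero_add, hg z, div_eq_mul_inv]
    rw [hval] at hgeo
    have hinj : Function.Injective (fun k : ℕ => 3 * k + 1) := by
      intro a b h
      have h' : 3 * a + 1 = 3 * b + 1 := h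
      omega
    rw [← Function.Injective.hasSum_iff hinj]
    · convert hgeo using 1
      · rfl
      funext k
      simp only [Function.comp_apply, ofScalars_coeff, he]
      have h1 : (3 * k + 1) % 3 = 1 := by omega
      have h2 : (3 * k + 1) / 3 = k := by omega
      rw [if_pos h1, h2, smul_eq_mul, mul_pow, ← pow_mul]
      ring
    · intro x hx
      have hx3 : x % 3 ≠ 1 := by
        intro h
        exact hx ⟨x / 3, show 3 * (x / 3) + 1 = x by omega⟩
      simp only [ofScalars_coeff, he, if_neg hx3, smul_zero]
  have hbe : ∀ n, b n = e n := by
    intro n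
    rw [hb n, iteratedDeriv_eq_coeff hgs n, ofScalars_coeff, mul_comm, mul_div_assoc,
      div_self (Nat.cast_ne_zero.mpr n.factorial_ne_zero), mul_one]
  have hb2 : b 2 = 0 := by rw [hbe]; simp [he]
  have hb3 : b 3 = 0 := by rw [hbe]; simp [he]
  have hb5 : b 5 = 0 := by rw [hbe]; simp [he]
  have hb4 : b 4 = c := by rw [hbe]; simp [he]
  rw [hb2, hb3, hb4, hb5]
  have : (0:ℂ) * (0 * c - 0 ^ 2) - c * (c - 0 * 0) + 0 * (0 - 0 ^ 2) = -c^2 := by ring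
  rw [this, norm_neg, norm_pow, hc, norm_div, Complex.norm_real, Real.norm_eq_abs,
    abs_of_pos hlam0]
  simp only [Complex.norm_ofNat]
  ring

end HankelAux

namespace HankelAux

lemma sub_coeff (A B : FormalMultilinearSeries ℂ ℂ ℂ) (n : ℕ) :
    (A - B).coeff n = A.coeff n - B.coeff n := rfl

lemma const_series_coeff_zero : (constFormalMultilinearSeries ℂ ℂ (1:ℂ)).coeff 0 = 1 := by
  show (constFormalMultilinearSeries ℂ ℂ (1:ℂ)) 0 (fun _ => 1) = 1
  rfl

lemma const_series_coeff_succ (n : ℕ) :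
    (constFormalMultilinearSeries ℂ ℂ (1:ℂ)).coeff (n+1) = 0 := by
  show (constFormalMultilinearSeries ℂ ℂ (1:ℂ)) (n+1) (fun _ => 1) = 0
  rw [constFormalMultilinearSeries_apply_of_nonzero (Nat.succ_ne_zero n)]
  rfl

end HankelAux


open HankelAux in
set_option maxHeartbeats 1000000 in
theorem hankel3_U_lambda (f g : ℂ → ℂ) (lam : ℝ) (hlam0 : 0 < lam) (hlam1 : lam ≤ 1)
    (hf : AnalyticOnNhd ℂ f (ball 0 1)) (hf0 : f 0 = 0) (hf1 : deriv f 0 = 1)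
    (hU : ∀ z ∈ ball (0:ℂ) 1, z ≠ 0 → ‖(z / f z) ^ 2 * deriv f z - 1‖ < lam)
    (a : ℕ → ℂ) (ha : ∀ n, a n = iteratedDeriv n f 0 / n.factorial)
    (hg : ∀ z, g z = z / (1 - ((lam:ℂ) / 2) * z ^ 3))
    (b : ℕ → ℂ) (hb : ∀ n, b n = iteratedDeriv n g 0 / n.factorial) :
    ‖a 3 * (a 2 * a 4 - (a 3) ^ 2) - a 4 * (a 4 - a 2 * a 3) + a 5 * (a 3 - (a 2) ^ 2)‖
      ≤ lam ^ 2 / 4 ∧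
    ‖b 3 * (b 2 * b 4 - (b 3) ^ 2) - b 4 * (b 4 - b 2 * b 3) + b 5 * (b 3 - (b 2) ^ 2)‖
      = lam ^ 2 / 4 := by
  refine ⟨?_, g_part hlam0 hlam1 hg b hb⟩
  have hball0 : (0:ℂ) ∈ ball (0:ℂ) 1 := by simp
  -- f is nonvanishing away from 0
  have hfz : ∀ z ∈ ball (0:ℂ) 1, z ≠ 0 → f z ≠ 0 := by
    intro z hz hz0 h0
    have h1 := hU z hz hz0
    rw [h0, div_zero] at h1
    have h2 : ((0:ℂ))^2 * deriv f z - 1 = -1 := by ring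
    rw [h2, norm_neg, norm_one] at h1
    linarith
  obtain ⟨p, hp⟩ := hf 0 hball0
  have hfact : ∀ n : ℕ, ((n.factorial : ℂ)) ≠ 0 :=
    fun n => Nat.cast_ne_zero.mpr n.factorial_ne_zero
  have ha' : ∀ n, a n = p.coeff n := by
    intro n
    rw [ha n, iteratedDeriv_eq_coeff hp n, mul_comm, mul_div_assoc, div_self (hfact n), mul_one]
  have ha1 : a 1 = 1 := by
    have h1 : p.coeff 1 = deriv f 0 := hp.deriv.symm
    rw [ha' 1, h1]
    exact hf1
  -- the function u = f z / z
  set u : ℂ → ℂ := dslope f 0 with hudef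
  have hu_series : HasFPowerSeriesAt u p.fslope 0 := hp.has_fpower_series_dslope_fslope
  have huanal : AnalyticOnNhd ℂ u (ball 0 1) := analyticOnNhd_dslope hf
  have hu0 : u 0 = 1 := by rw [hudef, dslope_same]; exact hf1
  have huz : ∀ z : ℂ, z ≠ 0 → u z = f z / z := by
    intro z hz0
    rw [hudef, dslope_of_ne _ hz0, slope_def_field, hf0, sub_zero, sub_zero]
  have hune : ∀ z ∈ ball (0:ℂ) 1, u z ≠ 0 := by
    intro z hz
    rcases eq_or_ne z 0 with rfl | hz0
    · rw [hu0]; exact one_ne_zero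
    · rw [huz z hz0]
      exact div_ne_zero (hfz z hz hz0) hz0
  -- φ = z / f z
  set φ : ℂ → ℂ := fun z => (u z)⁻¹ with hφdef
  have hφanal : AnalyticOnNhd ℂ φ (ball 0 1) := fun z hz => (huanal z hz).inv (hune z hz)
  obtain ⟨q, hq⟩ := hφanal 0 hball0
  have hφ0 : φ 0 = 1 := by rw [hφdef]; simp [hu0]
  have hc0 : q.coeff 0 = 1 := by
    have h1 : q.coeff 0 = φ 0 := hq.coeff_zero 1
    rw [h1]; exact hφ0
  -- coefficient equations from u * φ = 1
  have hprod := hasFPowerSeriesAt_mul hu_series hq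
  have hone : (fun z => u z * φ z) =ᶠ[𝓝 (0:ℂ)] fun _ => (1:ℂ) := by
    filter_upwards [isOpen_ball.mem_nhds hball0] with z hz
    exact mul_inv_cancel₀ (hune z hz)
  have huniq := (hprod.congr hone).eq_formalMultilinearSeries hasFPowerSeriesAt_const
  have hconv : ∀ n : ℕ, (∑ k ∈ Finset.range (n+1), p.fslope.coeff k * q.coeff (n-k))
      = (constFormalMultilinearSeries ℂ ℂ (1:ℂ)).coeff n := by
    intro n
    have := congrArg (fun s : FormalMultilinearSeries ℂ ℂ ℂ => s.coeff n) huniq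
    simpa [ofScalars_coeff] using this
  have hfsl : ∀ k, p.fslope.coeff k = a (k+1) := by
    intro k
    rw [FormalMultilinearSeries.coeff_fslope, ← ha']
  -- the four equations
  have eq1 : q.coeff 1 + a 2 = 0 := by
    have h := hconv 1
    rw [const_series_coeff_succ] at h
    simp only [Finset.sum_range_succ, Finset.sum_range_zero, hfsl] at h
    rw [ha1, hc0] at h
    linear_combination h
  have eq2 : q.coeff 2 + a 2 * q.coeff 1 + a 3 = 0 := by
    have h := hconv 2
    rw [const_series_coeff_succ] at h
    simp only [Finset.sum_range_succ, Finset.sum_range_zero, hfsl] at h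
    rw [ha1, hc0] at h
    norm_num at h
    linear_combination h
  have eq3 : q.coeff 3 + a 2 * q.coeff 2 + a 3 * q.coeff 1 + a 4 = 0 := by
    have h := hconv 3
    rw [const_series_coeff_succ] at h
    simp only [Finset.sum_range_succ, Finset.sum_range_zero, hfsl] at h
    rw [ha1, hc0] at h
    norm_num at h
    linear_combination h
  have eq4 : q.coeff 4 + a 2 * q.coeff 3 + a 3 * q.coeff 2 + a 4 * q.coeff 1 + a 5 = 0 := by
    have h := hconv 4
    rw [const_series_coeff_succ] at h
    simp only [Finset.sum_range_succ, Finset.sum_range_zero, hfsl] at h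
    rw [ha1, hc0] at h
    norm_num at h
    linear_combination h
  -- Hankel determinant in terms of the coefficients of φ
  have ha2 : a 2 = -q.coeff 1 := by linear_combination eq1
  have ha3 : a 3 = q.coeff 1^2 - q.coeff 2 := by linear_combination eq2 - q.coeff 1 * eq1
  have ha4 : a 4 = -q.coeff 1^3 + 2*q.coeff 1*q.coeff 2 - q.coeff 3 := by
    linear_combination eq3 - q.coeff 2 * eq1 - q.coeff 1 * eq2 + q.coeff 1^2 * eq1
  have ha5 : a 5 = q.coeff 1^4 - 3*q.coeff 1^2*q.coeff 2 + q.coeff 2^2 + 2*q.coeff 1*q.coeff 3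
      - q.coeff 4 := by
    linear_combination eq4 - q.coeff 3 * eq1 - q.coeff 2 * eq2 - q.coeff 1 * eq3
      + q.coeff 1 * q.coeff 2 * eq1 + q.coeff 1^2 * eq2 + (q.coeff 1 * q.coeff 2
      - q.coeff 1^3) * eq1
  have hH : a 3 * (a 2 * a 4 - (a 3) ^ 2) - a 4 * (a 4 - a 2 * a 3) + a 5 * (a 3 - (a 2) ^ 2)
      = q.coeff 2 * q.coeff 4 - q.coeff 3 ^ 2 := by
    rw [ha2, ha3, ha4, ha5]
    ring
  rw [hH]
  -- the Schwarz function ω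
  obtain ⟨qd, hqd, hqdc⟩ := deriv_series hq
  have hzser : HasFPowerSeriesAt (fun z : ℂ => z)
      (FormalMultilinearSeries.ofScalars ℂ (fun n => if n = 1 then (1:ℂ) else 0)) 0 := by
    rw [hasFPowerSeriesAt_iff]
    filter_upwards with z
    simp only [ofScalars_coeff, zero_add]
    have h1 : (fun n : ℕ => z ^ n • (if n = 1 then (1:ℂ) else 0))
        = fun n => if n = 1 then z else 0 := by
      funext n
      split <;> simp_all
    rw [h1]
    exact hasSum_ite_eq 1 z
  have hzd := hasFPowerSeriesAt_mul hzser hqd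
  set P : FormalMultilinearSeries ℂ ℂ ℂ := FormalMultilinearSeries.ofScalars ℂ
    (fun n => ∑ k ∈ Finset.range (n+1),
      (FormalMultilinearSeries.ofScalars ℂ (fun j => if j = 1 then (1:ℂ) else 0)).coeff k
        * qd.coeff (n-k)) with hP
  have hPc : ∀ n : ℕ, P.coeff (n+1) = (n+1 : ℂ) * q.coeff (n+1) := by
    intro n
    rw [hP, ofScalars_coeff]
    simp only [ofScalars_coeff]
    rw [Finset.sum_eq_single 1]
    · rw [if_pos rfl, one_mul]
      have h9 : n + 1 - 1 = n := by omega
      rw [h9, hqdc n]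
    · intro k hk hk1
      rw [if_neg hk1, zero_mul]
    · intro h
      exact absurd (Finset.mem_range.mpr (by omega)) h
  have hP0 : P.coeff 0 = 0 := by
    rw [hP, ofScalars_coeff]
    simp [ofScalars_coeff]
  set ω : ℂ → ℂ := fun z => φ z - z * deriv φ z - 1 with hω
  set R : FormalMultilinearSeries ℂ ℂ ℂ :=
    q - P - constFormalMultilinearSeries ℂ ℂ (1:ℂ) with hR
  have hr : HasFPowerSeriesAt ω R 0 := by
    have h9 := (hq.sub hzd).sub (hasFPowerSeriesAt_const (c := (1:ℂ)) (e := (0:ℂ)))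
    exact h9.congr (Filter.Eventually.of_forall fun z => rfl)
  have hRc : ∀ n : ℕ, R.coeff n = q.coeff n - P.coeff n
      - (constFormalMultilinearSeries ℂ ℂ (1:ℂ)).coeff n := by
    intro n
    rw [hR, sub_coeff, sub_coeff]
  have hR2 : R.coeff 2 = -q.coeff 2 := by
    rw [hRc, hPc 1, const_series_coeff_succ]
    norm_num
    ring
  have hR3 : R.coeff 3 = -2 * q.coeff 3 := by
    rw [hRc, hPc 2, const_series_coeff_succ]
    norm_num
    ring
  have hR4 : R.coeff 4 = -3 * q.coeff 4 := by
    rw [hRc, hPc 3, const_series_coeff_succ]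
    norm_num
    ring
  have hR1 : R.coeff 1 = 0 := by
    rw [hRc, hPc 0, const_series_coeff_succ]
    norm_num
  -- ω is analytic on the ball
  have hφd : AnalyticOnNhd ℂ (deriv φ) (ball 0 1) := hφanal.deriv
  have hωanal : AnalyticOnNhd ℂ ω (ball 0 1) := by
    intro z hz
    exact ((hφanal z hz).sub (analyticAt_id.mul (hφd z hz))).sub analyticAt_const
  have hω0 : ω 0 = 0 := by
    rw [hω]
    simp [hφ0]
  -- bound on ω
  have hωb : ∀ z ∈ ball (0:ℂ) 1, ‖ω z‖ ≤ lam := by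
    intro z hz
    rcases eq_or_ne z 0 with rfl | hz0
    · rw [hω0, norm_zero]; exact hlam0.le
    · have hfne := hfz z hz hz0
      have hφev : φ =ᶠ[𝓝 z] fun w => w / f w := by
        filter_upwards [isOpen_ne.mem_nhds hz0] with w hw
        rw [hφdef]
        show (u w)⁻¹ = w / f w
        rw [huz w hw, inv_div]
      have hdφ : deriv φ z = (f z - z * deriv f z) / (f z)^2 := by
        rw [hφev.deriv_eq]
        rw [deriv_fun_div (c := fun w => w) differentiableAt_id (hf z hz).differentiableAt hfne]
        simp
      have hφz : φ z = z / f z := by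
        rw [hφdef]
        show (u z)⁻¹ = z / f z
        rw [huz z hz0, inv_div]
      have hval : ω z = (z / f z) ^ 2 * deriv f z - 1 := by
        rw [hω]
        show φ z - z * deriv φ z - 1 = _
        rw [hφz, hdφ]
        field_simp
        ring
      rw [hval]
      exact (hU z hz hz0).le
  have hωd0 : deriv ω 0 = 0 := by
    rw [hr.deriv]
    exact hR1
  -- first dslope
  set h1f : ℂ → ℂ := dslope ω 0 with hh1
  have hh1series : HasFPowerSeriesAt h1f R.fslope 0 := hr.has_fpower_series_dslope_fslope
  have hh1anal : AnalyticOnNhd ℂ h1f (ball 0 1) := analyticOnNhd_dslope hωanal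
  have hh1b : ∀ z ∈ ball (0:ℂ) 1, ‖h1f z‖ ≤ lam :=
    dslope_norm_le hωanal.differentiableOn hω0 hωb
  have hh10 : h1f 0 = 0 := by
    rw [hh1, dslope_same]
    exact hωd0
  -- second dslope
  set h2f : ℂ → ℂ := dslope h1f 0 with hh2
  have hh2series : HasFPowerSeriesAt h2f R.fslope.fslope 0 :=
    hh1series.has_fpower_series_dslope_fslope
  have hh2anal : AnalyticOnNhd ℂ h2f (ball 0 1) := analyticOnNhd_dslope hh1anal
  have hh2b : ∀ z ∈ ball (0:ℂ) 1, ‖h2f z‖ ≤ lam :=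
    dslope_norm_le hh1anal.differentiableOn hh10 hh1b
  -- normalize
  set v : ℂ → ℂ := fun z => h2f z / (lam : ℂ) with hv
  have hlamne : ((lam : ℝ) : ℂ) ≠ 0 := by
    simp only [ne_eq, Complex.ofReal_eq_zero]
    exact hlam0.ne'
  set sv : FormalMultilinearSeries ℂ ℂ ℂ := FormalMultilinearSeries.ofScalars ℂ
    (fun n => R.fslope.fslope.coeff n / (lam : ℂ)) with hsv
  have hsvs : HasFPowerSeriesAt v sv 0 := by
    rw [hasFPowerSeriesAt_iff]
    have h2 := hasFPowerSeriesAt_iff.mp hh2series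
    filter_upwards [h2] with z hz
    simp only [hsv, ofScalars_coeff]
    have h3 := hz.div_const ((lam : ℝ) : ℂ)
    convert h3 using 1
    · rfl
    funext n
    simp only [smul_eq_mul]
    ring
  have hvanal : AnalyticOnNhd ℂ v (ball 0 1) := by
    intro z hz
    exact (hh2anal z hz).div analyticAt_const hlamne
  have hnl : ‖((lam:ℝ):ℂ)‖ = lam := by
    rw [Complex.norm_real, Real.norm_eq_abs, abs_of_pos hlam0]
  have hvb : ∀ z ∈ ball (0:ℂ) 1, ‖v z‖ ≤ 1 := by
    intro z hz
    rw [hv]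
    show ‖h2f z / ((lam:ℝ):ℂ)‖ ≤ 1
    rw [norm_div, hnl, div_le_one hlam0]
    exact hh2b z hz
  have key := schur_two hvanal hsvs hvb
  have hsvc : ∀ k, sv.coeff k = R.coeff (k+2) / (lam : ℂ) := by
    intro k
    rw [hsv, ofScalars_coeff, FormalMultilinearSeries.coeff_fslope,
      FormalMultilinearSeries.coeff_fslope]
  rw [hsvc 0, hsvc 1, hsvc 2] at key
  rw [hR2, hR3, hR4] at key
  have hval2 : (-q.coeff 2 / ((lam:ℝ):ℂ)) * ((-3 * q.coeff 4) / ((lam:ℝ):ℂ)) / 3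
      - ((-2 * q.coeff 3) / ((lam:ℝ):ℂ))^2 / 4
      = (q.coeff 2 * q.coeff 4 - q.coeff 3^2) / (((lam:ℝ):ℂ))^2 := by
    field_simp
    ring
  rw [hval2] at key
  rw [norm_div, norm_pow, hnl] at key
  rw [div_le_iff₀ (by positivity)] at key
  calc ‖q.coeff 2 * q.coeff 4 - q.coeff 3 ^ 2‖ ≤ 1/4 * lam^2 := key
    _ = lam^2/4 := by ring
end
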